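/- arXiv:2011.12239 — 12 statements merged into one kernel-verified Lean document; each statement's English description precedes it below -/
import Mathlib

section
/- Suppose ℒ = Θ̃ Π P Π' Θ̃ = V E V' with V'V = I_K and E diagonal invertible, and let I = (i_1,…,i_K) be indices of pure nodes with Π(I,:) = I_K. Then: (1) the K×K matrix B := Θ̃(I,I)^{-1} V(I,:) satisfies V = Θ̃ Π B; (2) F B = B E, where F = P Π' Θ̃² Π, i.e. the k-th column of B is a right eigenvector of F with eigenvalue E(k,k); and (3) B is the unique K×K matrix with V = Θ̃ Π B: if V = Θ̃ Π B̃ for some K×K matrix B̃ then B̃ = B. -/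
open Matrix

/-- Under the ideal DCMM setup `ℒ = Θ̃ Π P Π' Θ̃ = V E V'` with `V'V = I_K`,
`E` diagonal invertible, and pure-node index tuple `I` with `Π(I,:) = I_K`, the matrix
`B := Θ̃(I,I)⁻¹ V(I,:)` satisfies (1) `V = Θ̃ Π B`; (2) `F B = B E` with
`F = P Π' Θ̃² Π` (so the `k`-th column of `B` is a right eigenvector of `F` with
eigenvalue `E(k,k)`); (3) `B` is the unique matrix with `V = Θ̃ Π B`. -/
theorem existB_of_ideal_laplacian {n K : ℕ} (hK : 1 ≤ K) (hKn : K ≤ n)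
    (Pim : Matrix (Fin n) (Fin K) ℝ)
    (hnonneg : ∀ i k, 0 ≤ Pim i k)
    (hrowsum : ∀ i, ∑ k, Pim i k = 1)
    (I : Fin K → Fin n)
    (hpure : ∀ k l, Pim (I k) l = if l = k then (1 : ℝ) else 0)
    (θ : Fin n → ℝ) (hθ : ∀ i, 0 < θ i)
    (P : Matrix (Fin K) (Fin K) ℝ) (hPsymm : P.IsSymm)
    (V : Matrix (Fin n) (Fin K) ℝ) (E : Matrix (Fin K) (Fin K) ℝ)
    (hEdiag : E.IsDiag) (hEunit : IsUnit E)
    (hVorth : Vᵀ * V = 1)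
    (hL : Matrix.diagonal θ * Pim * P * Pimᵀ * Matrix.diagonal θ = V * E * Vᵀ) :
    V = Matrix.diagonal θ * Pim *
        (Matrix.diagonal (fun k => (θ (I k))⁻¹) * V.submatrix I id) ∧
    (P * Pimᵀ * Matrix.diagonal (fun i => θ i ^ 2) * Pim) *
        (Matrix.diagonal (fun k => (θ (I k))⁻¹) * V.submatrix I id) =
      (Matrix.diagonal (fun k => (θ (I k))⁻¹) * V.submatrix I id) * E ∧
    (∀ B : Matrix (Fin K) (Fin K) ℝ, V = Matrix.diagonal θ * Pim * B →
      B = Matrix.diagonal (fun k => (θ (I k))⁻¹) * V.submatrix I id) := by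
  have hEdet : IsUnit E.det := (Matrix.isUnit_iff_isUnit_det E).mp hEunit
  have hEinv : E * E⁻¹ = 1 := Matrix.mul_nonsing_inv E hEdet
  -- key submatrix identity
  have key : ∀ B : Matrix (Fin K) (Fin K) ℝ,
      (Matrix.diagonal θ * Pim * B).submatrix I id
        = Matrix.diagonal (fun k => θ (I k)) * B := by
    intro B
    ext k l
    simp only [Matrix.submatrix_apply, id_eq, Matrix.mul_apply,
      Matrix.diagonal_apply, Matrix.diagonal_mul, hpure]
    rw [Finset.sum_eq_single k]
    · simp [hpure]
    · intro j _ hj; simp [hpure, hj]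
    · simp
  have uniq : ∀ B : Matrix (Fin K) (Fin K) ℝ, V = Matrix.diagonal θ * Pim * B →
      B = Matrix.diagonal (fun k => (θ (I k))⁻¹) * V.submatrix I id := by
    intro B hB
    have h1 : V.submatrix I id = Matrix.diagonal (fun k => θ (I k)) * B := by
      rw [hB]; exact key B
    rw [h1, ← Matrix.mul_assoc, Matrix.diagonal_mul_diagonal]
    have h2 : (fun k => (θ (I k))⁻¹ * θ (I k)) = fun _ => (1 : ℝ) := by
      funext k; exact inv_mul_cancel₀ (hθ (I k)).ne'
    rw [h2, Matrix.diagonal_one, Matrix.one_mul]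
  set C := P * Pimᵀ * Matrix.diagonal θ * V * E⁻¹ with hC
  have hLV : Matrix.diagonal θ * Pim * P * Pimᵀ * Matrix.diagonal θ * V = V * E := by
    rw [hL, Matrix.mul_assoc, hVorth, Matrix.mul_one]
  have hVC : V = Matrix.diagonal θ * Pim * C := by
    rw [hC]
    calc V = V * E * E⁻¹ := by rw [Matrix.mul_assoc, hEinv, Matrix.mul_one]
    _ = Matrix.diagonal θ * Pim * P * Pimᵀ * Matrix.diagonal θ * V * E⁻¹ := by rw [hLV]
    _ = Matrix.diagonal θ * Pim * (P * Pimᵀ * Matrix.diagonal θ * V * E⁻¹) := by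
        simp only [Matrix.mul_assoc]
  have hCB := uniq C hVC
  have part1 : V = Matrix.diagonal θ * Pim *
      (Matrix.diagonal (fun k => (θ (I k))⁻¹) * V.submatrix I id) := by
    rw [← hCB]; exact hVC
  refine ⟨part1, ?_, uniq⟩
  have hθ2 : Matrix.diagonal (fun i => θ i ^ 2)
      = Matrix.diagonal θ * Matrix.diagonal θ := by
    rw [Matrix.diagonal_mul_diagonal]
    have : (fun i => θ i ^ 2) = fun i => θ i * θ i := by funext i; ring
    rw [this]
  rw [← hCB, hθ2]
  calc P * Pimᵀ * (Matrix.diagonal θ * Matrix.diagonal θ) * Pim * C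
      = P * Pimᵀ * Matrix.diagonal θ * (Matrix.diagonal θ * Pim * C) := by
        simp only [Matrix.mul_assoc]
    _ = P * Pimᵀ * Matrix.diagonal θ * V := by rw [← hVC]
    _ = C * E := by
        rw [hC, Matrix.mul_assoc (P * Pimᵀ * Matrix.diagonal θ * V) E⁻¹ E,
          Matrix.nonsing_inv_mul E hEdet, Matrix.mul_one]
end

section
/- Suppose V = Θ̃ Π B with B ∈ ℝ^{K×K} invertible, where Π is a membership matrix with pure-node index tuple I satisfying Π(I,:) = I_K and Θ̃ is diagonal with strictly positive diagonal. Then every row of V is nonzero, and there exists a matrix Y ∈ ℝ^{n×K} with all entries nonnegative and no row equal to zero such that V_{*,1} = Y V_{*,1}(I,:); explicitly Y = N_M Π Θ̃(I,I)^{-1} N_V(I,I)^{-1}, where N_M is the diagonal matrix with N_M(i,i) = 1/‖(Π Θ̃(I,I)^{-1} V(I,:))(i,:)‖₂. Moreover, for any two indices i, j with Π(i,:) = Π(j,:), one has V_{*,1}(i,:) = V_{*,1}(j,:). -/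
open Matrix

/-- The Euclidean norm of a row vector. -/
noncomputable def rnorm {m : ℕ} (v : Fin m → ℝ) : ℝ := Real.sqrt (∑ j, v j ^ 2)

/-- Row-wise ℓ₂-normalization of a matrix. -/
noncomputable def rowNormalize {n m : ℕ} (V : Matrix (Fin n) (Fin m) ℝ) :
    Matrix (Fin n) (Fin m) ℝ :=
  Matrix.of fun i j => V i j / rnorm (V i)

lemma rnorm_nonneg {m : ℕ} (v : Fin m → ℝ) : 0 ≤ rnorm v := Real.sqrt_nonneg _

lemma rnorm_eq_zero {m : ℕ} {v : Fin m → ℝ} (h : rnorm v = 0) : v = 0 := by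
  have hs : ∑ j, v j ^ 2 = 0 :=
    le_antisymm (Real.sqrt_eq_zero'.mp h) (Finset.sum_nonneg fun j _ => sq_nonneg _)
  funext j
  have := (Finset.sum_eq_zero_iff_of_nonneg (fun j _ => sq_nonneg (v j))).mp hs j
    (Finset.mem_univ j)
  simpa using pow_eq_zero_iff (two_ne_zero) |>.mp this

lemma rnorm_pos {m : ℕ} {v : Fin m → ℝ} (h : v ≠ 0) : 0 < rnorm v :=
  (rnorm_nonneg v).lt_of_ne fun h0 => h (rnorm_eq_zero h0.symm)

lemma rnorm_smul {m : ℕ} {c : ℝ} (hc : 0 ≤ c) (v : Fin m → ℝ) :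
    rnorm (fun j => c * v j) = c * rnorm v := by
  unfold rnorm
  have : ∑ j, (c * v j) ^ 2 = c ^ 2 * ∑ j, v j ^ 2 := by
    rw [Finset.mul_sum]; simp [mul_pow]
  rw [this, Real.sqrt_mul (sq_nonneg c), Real.sqrt_sq hc]

lemma vecMul_ne_zero {K : ℕ} {B : Matrix (Fin K) (Fin K) ℝ} (hB : IsUnit B)
    {x : Fin K → ℝ} (hx : x ≠ 0) : x ᵥ* B ≠ 0 := by
  have hdet : IsUnit B.det := (Matrix.isUnit_iff_isUnit_det B).mp hB
  intro h0
  have h1 : x ᵥ* (B * B⁻¹) = 0 := by rw [← Matrix.vecMul_vecMul, h0]; simp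
  rw [Matrix.mul_nonsing_inv B hdet] at h1
  exact hx (by simpa using h1)

/-- **Ideal Cone.** If `V = Θ̃ Π B` with `B` invertible, `Π` a membership matrix
with pure-node tuple `I` (`Π(I,:) = I_K`) and `Θ̃` diagonal positive, then every row of `V`
is nonzero, the explicit matrix `Y = N_M Π Θ̃(I,I)⁻¹ N_V(I,I)⁻¹` is nonnegative with no zero
row and satisfies `V₊ = Y V₊(I,:)` for the row-normalization `V₊` of `V`; moreover
`Π(i,:) = Π(j,:)` implies `V₊(i,:) = V₊(j,:)`. -/
theorem ideal_cone_structure {n K : ℕ} (hK : 1 ≤ K) (hKn : K ≤ n)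
    (Pim : Matrix (Fin n) (Fin K) ℝ)
    (hnonneg : ∀ i k, 0 ≤ Pim i k)
    (hrowsum : ∀ i, ∑ k, Pim i k = 1)
    (I : Fin K → Fin n)
    (hpure : ∀ k l, Pim (I k) l = if l = k then (1 : ℝ) else 0)
    (θ : Fin n → ℝ) (hθ : ∀ i, 0 < θ i)
    (B : Matrix (Fin K) (Fin K) ℝ) (hB : IsUnit B)
    (V : Matrix (Fin n) (Fin K) ℝ)
    (hV : V = Matrix.diagonal θ * Pim * B) :
    (∀ i, V i ≠ 0) ∧
    (let M := Pim * Matrix.diagonal (fun k => (θ (I k))⁻¹) * V.submatrix I id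
     let Y := Matrix.diagonal (fun i => (rnorm (M i))⁻¹) * Pim *
       Matrix.diagonal (fun k => (θ (I k))⁻¹) *
       Matrix.diagonal (fun k => rnorm (V (I k)))
     (∀ i k, 0 ≤ Y i k) ∧ (∀ i, Y i ≠ 0) ∧
       rowNormalize V = Y * (rowNormalize V).submatrix I id) ∧
    (∀ i j, Pim i = Pim j → rowNormalize V i = rowNormalize V j) := by
  set f : Matrix (Fin n) (Fin K) ℝ := Pim * B with hf
  have hVf : ∀ i j, V i j = θ i * f i j := by
    intro i j
    rw [hV, Matrix.mul_assoc, ← hf, Matrix.diagonal_mul]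
  have hfI : ∀ k, f (I k) = B k := by
    intro k; funext j
    simp [hf, Matrix.mul_apply, hpure, ite_mul]
  have hPne : ∀ i, Pim i ≠ (0 : Fin K → ℝ) := by
    intro i h
    have h1 := hrowsum i
    simp [show ∀ k, Pim i k = 0 from fun k => congrFun h k] at h1
  have hfne : ∀ i, f i ≠ 0 := by
    intro i
    have : f i = Pim i ᵥ* B := by
      funext j; simp [hf, Matrix.mul_apply, Matrix.vecMul, dotProduct]
    rw [this]
    exact vecMul_ne_zero hB (hPne i)
  have hVif : ∀ i, V i = fun j => θ i * f i j := fun i => funext (hVf i)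
  have hVne : ∀ i, V i ≠ 0 := by
    intro i h
    apply hfne i
    funext j
    have h1 := congrFun h j
    rw [hVf i j] at h1
    exact (mul_eq_zero.mp h1).resolve_left (ne_of_gt (hθ i))
  have hrV : ∀ i, rnorm (V i) = θ i * rnorm (f i) := by
    intro i; rw [hVif i, rnorm_smul (le_of_lt (hθ i))]
  have hrow : ∀ i j, rowNormalize V i j = f i j / rnorm (f i) := by
    intro i j
    show V i j / rnorm (V i) = _
    rw [hVf, hrV, mul_div_mul_left _ _ (ne_of_gt (hθ i))]
  have hBk : ∀ k, B k ≠ 0 := fun k => hfI k ▸ hfne (I k)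
  refine ⟨hVne, ?_, ?_⟩
  · dsimp only
    have hM : Pim * Matrix.diagonal (fun k => (θ (I k))⁻¹) * V.submatrix I id = f := by
      ext i j
      rw [Matrix.mul_apply]
      simp only [Matrix.mul_diagonal, Matrix.submatrix_apply, id_eq]
      trans (∑ k, Pim i k * B k j)
      · refine Finset.sum_congr rfl fun k _ => ?_
        rw [hVf (I k) j, hfI k]
        field_simp [ne_of_gt (hθ (I k))]
      · simp [hf, Matrix.mul_apply]
    rw [hM]
    have hYentry : ∀ i k,
        (Matrix.diagonal (fun i => (rnorm (f i))⁻¹) * Pim *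
          Matrix.diagonal (fun k => (θ (I k))⁻¹) *
          Matrix.diagonal (fun k => rnorm (V (I k)))) i k =
        (rnorm (f i))⁻¹ * Pim i k * (θ (I k))⁻¹ * rnorm (V (I k)) := by
      intro i k
      simp [Matrix.mul_diagonal, Matrix.diagonal_mul]
    refine ⟨?_, ?_, ?_⟩
    · intro i k
      rw [hYentry]
      exact mul_nonneg (mul_nonneg (mul_nonneg (inv_nonneg.mpr (rnorm_nonneg _))
        (hnonneg i k)) (inv_nonneg.mpr (le_of_lt (hθ (I k))))) (rnorm_nonneg _)
    · intro i h
      obtain ⟨k, _, hk⟩ := Finset.exists_ne_zero_of_sum_ne_zero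
        (by rw [hrowsum i]; norm_num : ∑ k, Pim i k ≠ 0)
      have h1 := congrFun h k
      rw [hYentry] at h1
      exact (mul_ne_zero (mul_ne_zero (mul_ne_zero
        (inv_ne_zero (ne_of_gt (rnorm_pos (hfne i)))) hk)
        (inv_ne_zero (ne_of_gt (hθ (I k)))))
        (ne_of_gt (rnorm_pos (hVne (I k))))) (by simpa using h1)
    · ext i j
      rw [hrow]
      rw [Matrix.mul_apply]
      have : ∀ k, (Matrix.diagonal (fun i => (rnorm (f i))⁻¹) * Pim *
          Matrix.diagonal (fun k => (θ (I k))⁻¹) *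
          Matrix.diagonal (fun k => rnorm (V (I k)))) i k *
          (rowNormalize V).submatrix I id k j =
          (rnorm (f i))⁻¹ * (Pim i k * B k j) := by
        intro k
        rw [hYentry, Matrix.submatrix_apply, id_eq, hrow, hfI, hrV, hfI]
        have h2 : rnorm (B k) ≠ 0 := ne_of_gt (rnorm_pos (hBk k))
        have h3 : θ (I k) ≠ 0 := ne_of_gt (hθ (I k))
        rw [div_eq_mul_inv, show (rnorm (f i))⁻¹ * Pim i k * (θ (I k))⁻¹ *
          (θ (I k) * rnorm (B k)) * (B k j * (rnorm (B k))⁻¹) =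
          (rnorm (f i))⁻¹ * (Pim i k * B k j) *
          (((θ (I k))⁻¹ * θ (I k)) * (rnorm (B k) * (rnorm (B k))⁻¹)) from by ring,
          inv_mul_cancel₀ h3, mul_inv_cancel₀ h2, mul_one, mul_one]
      rw [Finset.sum_congr rfl fun k _ => this k, ← Finset.mul_sum]
      rw [show f i j = ∑ k, Pim i k * B k j from by simp [hf, Matrix.mul_apply]]
      rw [div_eq_inv_mul]
  · intro i j hij
    have hfij : f i = f j := by
      funext l
      simp only [hf, Matrix.mul_apply]
      exact Finset.sum_congr rfl fun k _ => by rw [congrFun hij k]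
    funext l
    rw [hrow, hrow, hfij]
end

section
/- Suppose ℒ = Θ̃ Π P Π' Θ̃ = V E V', where Π is a membership matrix with pure-node index tuple I satisfying Π(I,:) = I_K, Θ̃ is diagonal with strictly positive diagonal, and every diagonal entry of the symmetric matrix P equals 1. Then for each k ∈ {1,…,K}, the k-th diagonal entry of V(I,:) E V'(I,:) is strictly positive and Θ̃(i_k,i_k) = √((V(I,:) E V'(I,:))(k,k)); that is, Θ̃(I,I) = √(diag(V(I,:) E V'(I,:))). -/
open Matrix

/-- If `Θ̃ Π P Π' Θ̃ = V E V'` with `Π` a membership matrix having pure-node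
tuple `I` (`Π(I,:) = I_K`), `Θ̃` diagonal positive, and `P` symmetric with unit diagonal,
then for each `k` the `k`-th diagonal entry of `V(I,:) E V(I,:)'` is strictly positive and
`Θ̃(i_k,i_k) = √((V(I,:) E V(I,:)')(k,k))`. -/
theorem thetaTilde_eq_sqrt_diag {n K : ℕ} (hK : 1 ≤ K) (hKn : K ≤ n)
    (Pim : Matrix (Fin n) (Fin K) ℝ)
    (hnonneg : ∀ i k, 0 ≤ Pim i k)
    (hrowsum : ∀ i, ∑ k, Pim i k = 1)
    (I : Fin K → Fin n)
    (hpure : ∀ k l, Pim (I k) l = if l = k then (1 : ℝ) else 0)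
    (θ : Fin n → ℝ) (hθ : ∀ i, 0 < θ i)
    (P : Matrix (Fin K) (Fin K) ℝ) (hPsymm : P.IsSymm) (hPdiag : ∀ k, P k k = 1)
    (V : Matrix (Fin n) (Fin K) ℝ) (E : Matrix (Fin K) (Fin K) ℝ)
    (hL : Matrix.diagonal θ * Pim * P * Pimᵀ * Matrix.diagonal θ = V * E * Vᵀ) :
    ∀ k : Fin K,
      0 < (V.submatrix I id * E * (V.submatrix I id)ᵀ) k k ∧
      θ (I k) = Real.sqrt ((V.submatrix I id * E * (V.submatrix I id)ᵀ) k k) := by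
  intro k
  have h := congrFun (congrFun hL (I k)) (I k)
  have hLHS : (Matrix.diagonal θ * Pim * P * Pimᵀ * Matrix.diagonal θ) (I k) (I k)
      = θ (I k) ^ 2 := by
    have hmid : (Pim * P * Pimᵀ) (I k) (I k) = 1 := by
      simp [Matrix.mul_apply, Matrix.transpose_apply, hpure, ite_mul, mul_ite, hPdiag]
    have : (Matrix.diagonal θ * Pim * P * Pimᵀ * Matrix.diagonal θ) (I k) (I k)
        = θ (I k) * (Pim * P * Pimᵀ) (I k) (I k) * θ (I k) := by
      rw [Matrix.mul_diagonal]
      congr 1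
      have : Matrix.diagonal θ * Pim * P * Pimᵀ = Matrix.diagonal θ * (Pim * P * Pimᵀ) := by
        simp [Matrix.mul_assoc]
      rw [this, Matrix.diagonal_mul]
    rw [this, hmid]
    ring
  have hRHS : (V * E * Vᵀ) (I k) (I k)
      = (V.submatrix I id * E * (V.submatrix I id)ᵀ) k k := by
    simp [Matrix.mul_apply, Matrix.transpose_apply, Matrix.submatrix_apply]
  rw [hLHS, hRHS] at h
  have hpos : 0 < θ (I k) ^ 2 := pow_pos (hθ _) 2
  refine ⟨h ▸ hpos, ?_⟩
  rw [← h, Real.sqrt_sq (hθ _).le]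
end

section
/- Under the ideal setup (ℒ = Θ̃ Π P Π' Θ̃ = V E V', V'V = I_K, E diagonal invertible, P symmetric invertible with all diagonal entries equal to 1, Π a rank-K membership matrix with pure index tuple I so that Π(I,:) = I_K, Θ̃ diagonal with positive diagonal), define V_{*,1} = N_V V, Y_• = V V_{*,1}(I,:)' (V_{*,1}(I,:) V_{*,1}(I,:)')^{-1}, J = √(diag(V_{*,1}(I,:) E V_{*,1}(I,:)')), and Z = Y_• J. Then Z = D Π for some diagonal matrix D with strictly positive diagonal entries, and consequently for every i ∈ {1,…,n}, Π(i,:) = Z(i,:)/‖Z(i,:)‖₁; i.e., the Ideal Mixed-RSC procedure exactly recovers the membership matrix Π. -/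
open Matrix

lemma rnorm_const_mul {m : ℕ} (c : ℝ) (hc : 0 ≤ c) (v : Fin m → ℝ) :
    rnorm (fun j => c * v j) = c * rnorm v := by
  unfold rnorm
  have h : ∑ j, (c * v j) ^ 2 = c ^ 2 * ∑ j, v j ^ 2 := by
    rw [Finset.mul_sum]; exact Finset.sum_congr rfl (fun j _ => by ring)
  rw [h, Real.sqrt_mul (sq_nonneg c), Real.sqrt_sq hc]

lemma mul_submatrix' {p q k a b : ℕ} (M : Matrix (Fin p) (Fin k) ℝ) (N : Matrix (Fin k) (Fin q) ℝ)
    (f : Fin a → Fin p) (g : Fin b → Fin q) :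
    (M * N).submatrix f g = M.submatrix f id * N.submatrix id g := by
  ext i j
  simp [Matrix.mul_apply]

/-- **Ideal Mixed-RSC exactly recovers Π.** Under the ideal setup
(`ℒ = Θ̃ Π P Π' Θ̃ = V E V'`, `V'V = I_K`, `E` diagonal invertible, `P` symmetric invertible
with unit diagonal, `Π` a rank-`K` membership matrix with `Π(I,:) = I_K`, `Θ̃` diagonal
positive), setting `Vc = V₊(I,:)`, `Y• = V Vc' (Vc Vc')⁻¹`, `J = √(diag(Vc E Vc'))` and
`Z = Y• J`, we have `Z = D Π` for a positive diagonal `D`, hence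
`Π(i,:) = Z(i,:)/‖Z(i,:)‖₁` for every `i`. -/
theorem ideal_mixed_RSC_recovers {n K : ℕ} (hK : 1 ≤ K) (hKn : K ≤ n)
    (Pim : Matrix (Fin n) (Fin K) ℝ)
    (hnonneg : ∀ i k, 0 ≤ Pim i k)
    (hrowsum : ∀ i, ∑ k, Pim i k = 1)
    (hrank : Pim.rank = K)
    (I : Fin K → Fin n)
    (hpure : ∀ k l, Pim (I k) l = if l = k then (1 : ℝ) else 0)
    (θ : Fin n → ℝ) (hθ : ∀ i, 0 < θ i)
    (P : Matrix (Fin K) (Fin K) ℝ)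
    (hPsymm : P.IsSymm) (hPunit : IsUnit P) (hPdiag : ∀ k, P k k = 1)
    (V : Matrix (Fin n) (Fin K) ℝ) (E : Matrix (Fin K) (Fin K) ℝ)
    (hVorth : Vᵀ * V = 1) (hEdiag : E.IsDiag) (hEunit : IsUnit E)
    (hL : Matrix.diagonal θ * Pim * P * Pimᵀ * Matrix.diagonal θ = V * E * Vᵀ)
    (hrows : ∀ i, V i ≠ 0) :
    let Vc := (rowNormalize V).submatrix I id
    let Yb := V * Vcᵀ * (Vc * Vcᵀ)⁻¹
    let J := Matrix.diagonal (fun k => Real.sqrt ((Vc * E * Vcᵀ) k k))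
    let Z := Yb * J
    (∃ d : Fin n → ℝ, (∀ i, 0 < d i) ∧ Z = Matrix.diagonal d * Pim) ∧
    ∀ i k, Pim i k = Z i k / ∑ l, |Z i l| := by
  intro Vc Yb J Z
  have hVcdef : Vc = (rowNormalize V).submatrix I id := rfl
  have hYbdef : Yb = V * Vcᵀ * (Vc * Vcᵀ)⁻¹ := rfl
  have hJdef : J = Matrix.diagonal (fun k => Real.sqrt ((Vc * E * Vcᵀ) k k)) := rfl
  have hZdef : Z = Yb * J := rfl
  clear_value Vc Yb J Z
  have hEdet : IsUnit E.det := (Matrix.isUnit_iff_isUnit_det E).mp hEunit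
  have hPdet : IsUnit P.det := (Matrix.isUnit_iff_isUnit_det P).mp hPunit
  set Θ : Matrix (Fin n) (Fin n) ℝ := Matrix.diagonal θ with hΘ
  -- Step A : V = Θ * Pim * B for some B
  obtain ⟨B, hA⟩ : ∃ B : Matrix (Fin K) (Fin K) ℝ, V = Θ * Pim * B := by
    refine ⟨P * Pimᵀ * Θ * V * E⁻¹, ?_⟩
    have h1 : V = V * E * E⁻¹ := by
      rw [Matrix.mul_assoc, Matrix.mul_nonsing_inv E hEdet, Matrix.mul_one]
    have h2 : V * E = V * E * Vᵀ * V := by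
      rw [Matrix.mul_assoc (V * E) Vᵀ V, hVorth, Matrix.mul_one]
    calc V = V * E * E⁻¹ := h1
      _ = V * E * Vᵀ * V * E⁻¹ := by rw [← h2]
      _ = Θ * Pim * P * Pimᵀ * Θ * V * E⁻¹ := by rw [hL]
      _ = Θ * Pim * (P * Pimᵀ * Θ * V * E⁻¹) := by simp only [Matrix.mul_assoc]
  -- row formula
  have hVrow : ∀ i j, V i j = θ i * (Pim * B) i j := by
    intro i j
    rw [hA, Matrix.mul_assoc, hΘ, Matrix.diagonal_mul]
  have hPB : ∀ k, (Pim * B) (I k) = B k := by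
    intro k; funext j
    simp [Matrix.mul_apply, hpure]
  set r : Fin K → ℝ := fun k => rnorm (B k) with hrdef
  have hr : ∀ k, 0 < r k := by
    intro k
    apply rnorm_pos
    intro h0
    apply hrows (I k)
    funext j
    rw [hVrow (I k) j, hPB k, h0]
    simp
  have hVnormIk : ∀ k, rnorm (V (I k)) = θ (I k) * r k := by
    intro k
    have : V (I k) = fun j => θ (I k) * B k j := by
      funext j; rw [hVrow, hPB]
    rw [this, rnorm_const_mul _ (le_of_lt (hθ _)), hrdef]
  have hVc : Vc = Matrix.diagonal (fun k => (r k)⁻¹) * B := by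
    rw [hVcdef]
    ext k j
    show rowNormalize V (I k) j = _
    rw [Matrix.diagonal_mul]
    show V (I k) j / rnorm (V (I k)) = (r k)⁻¹ * B k j
    rw [hVrow, hPB, hVnormIk]
    rw [div_eq_iff (mul_pos (hθ _) (hr k)).ne']
    field_simp [(hr k).ne']
  -- submatrix identities
  set DI : Matrix (Fin K) (Fin K) ℝ := Matrix.diagonal (fun k => θ (I k)) with hDIdef
  set DIinv : Matrix (Fin K) (Fin K) ℝ := Matrix.diagonal (fun k => (θ (I k))⁻¹) with hDIinvdef
  have hDI1 : DIinv * DI = 1 := by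
    rw [hDIdef, hDIinvdef, Matrix.diagonal_mul_diagonal,
      show (fun k => (θ (I k))⁻¹ * θ (I k)) = fun _ => (1:ℝ) from
        funext fun k => inv_mul_cancel₀ (hθ _).ne', Matrix.diagonal_one]
  have hDI2 : DI * DIinv = 1 := by
    rw [hDIdef, hDIinvdef, Matrix.diagonal_mul_diagonal,
      show (fun k => θ (I k) * (θ (I k))⁻¹) = fun _ => (1:ℝ) from
        funext fun k => mul_inv_cancel₀ (hθ _).ne', Matrix.diagonal_one]
  have hVsub : V.submatrix I id = DI * B := by
    ext k j
    rw [hDIdef, Matrix.diagonal_mul]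
    show V (I k) j = θ (I k) * B k j
    rw [hVrow, hPB]
  have hTPsub : (Θ * Pim).submatrix I id = DI := by
    ext k m
    show (Θ * Pim) (I k) m = DI k m
    rw [hΘ, Matrix.diagonal_mul, hpure, hDIdef]
    by_cases h : m = k
    · simp [h, Matrix.diagonal]
    · simp [h, Matrix.diagonal, Ne.symm h]
  have hPTsub : (Pimᵀ * Θ).submatrix id I = DI := by
    ext m k
    show (Pimᵀ * Θ) m (I k) = DI m k
    rw [hΘ, Matrix.mul_diagonal, Matrix.transpose_apply, hpure, hDIdef]
    by_cases h : m = k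
    · simp [h, Matrix.diagonal]
    · simp [h, Matrix.diagonal, Ne.symm h]
  -- B * E * Bᵀ = P
  have key := congrArg (fun M => M.submatrix I I) hL
  change (Θ * Pim * P * Pimᵀ * Θ).submatrix I I = (V * E * Vᵀ).submatrix I I at key
  have keyL : (Θ * Pim * P * Pimᵀ * Θ).submatrix I I = DI * (P * DI) := by
    have e1 : Θ * Pim * P * Pimᵀ * Θ = (Θ * Pim) * (P * (Pimᵀ * Θ)) := by
      simp only [Matrix.mul_assoc]
    rw [e1, mul_submatrix', hTPsub, mul_submatrix', Matrix.submatrix_id_id, hPTsub]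
  have keyR : (V * E * Vᵀ).submatrix I I = DI * (B * (E * (Bᵀ * DI))) := by
    have e1 : V * E * Vᵀ = V * (E * Vᵀ) := by simp only [Matrix.mul_assoc]
    rw [e1, mul_submatrix', hVsub, mul_submatrix', Matrix.submatrix_id_id,
      ← Matrix.transpose_submatrix, hVsub, Matrix.transpose_mul, Matrix.diagonal_transpose,
      ← hDIdef]
    simp only [Matrix.mul_assoc]
  rw [keyL, keyR] at key
  have hBEB : B * E * Bᵀ = P := by
    have h1 : P * DI = B * (E * (Bᵀ * DI)) := by
      calc P * DI = DIinv * (DI * (P * DI)) := by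
            rw [← Matrix.mul_assoc, hDI1, Matrix.one_mul]
        _ = DIinv * (DI * (B * (E * (Bᵀ * DI)))) := by rw [key]
        _ = B * (E * (Bᵀ * DI)) := by rw [← Matrix.mul_assoc, hDI1, Matrix.one_mul]
    have h2 := congrArg (fun M => M * DIinv) h1
    simp only [Matrix.mul_assoc, hDI2, Matrix.mul_one] at h2
    simp only [Matrix.mul_assoc]
    exact h2.symm
  -- invertibility of B
  have hBdet : IsUnit B.det := by
    have hd : P.det = B.det * E.det * B.det := by
      rw [← hBEB, Matrix.det_mul, Matrix.det_mul, Matrix.det_transpose]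
    have hu : IsUnit (B.det * E.det * B.det) := by rw [← hd]; exact hPdet
    exact isUnit_of_mul_isUnit_left (isUnit_of_mul_isUnit_left hu)
  have hBTdet : IsUnit Bᵀ.det := by rwa [Matrix.det_transpose]
  have hBinv : B * B⁻¹ = 1 := Matrix.mul_nonsing_inv _ hBdet
  have hBTinv : Bᵀ * Bᵀ⁻¹ = 1 := Matrix.mul_nonsing_inv _ hBTdet
  set Dr : Matrix (Fin K) (Fin K) ℝ := Matrix.diagonal (fun k => (r k)⁻¹) with hDrdef
  set Rr : Matrix (Fin K) (Fin K) ℝ := Matrix.diagonal r with hRrdef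
  have hDr1 : Dr * Rr = 1 := by
    rw [hDrdef, hRrdef, Matrix.diagonal_mul_diagonal,
      show (fun k => (r k)⁻¹ * r k) = fun _ => (1:ℝ) from
        funext fun k => inv_mul_cancel₀ (hr k).ne', Matrix.diagonal_one]
  have hDr2 : Rr * Dr = 1 := by
    rw [hDrdef, hRrdef, Matrix.diagonal_mul_diagonal,
      show (fun k => r k * (r k)⁻¹) = fun _ => (1:ℝ) from
        funext fun k => mul_inv_cancel₀ (hr k).ne', Matrix.diagonal_one]
  have hDrinv : Dr⁻¹ = Rr := Matrix.inv_eq_right_inv hDr1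
  have hVcT : Vcᵀ = Bᵀ * Dr := by
    rw [hVc, Matrix.transpose_mul, Matrix.diagonal_transpose]
  have cancel : ∀ (A C X : Matrix (Fin K) (Fin K) ℝ), A * C = 1 → A * (C * X) = X := by
    intro A C X h; rw [← Matrix.mul_assoc, h, Matrix.one_mul]
  have hinv : (Vc * Vcᵀ)⁻¹ = Rr * Bᵀ⁻¹ * (B⁻¹ * Rr) := by
    rw [hVcT, hVc, Matrix.mul_inv_rev, Matrix.mul_inv_rev, Matrix.mul_inv_rev, hDrinv,
      Matrix.mul_assoc]
  have hYb : Yb = Θ * (Pim * Rr) := by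
    rw [hYbdef, hinv, hVcT, hA]
    simp only [Matrix.mul_assoc]
    rw [cancel _ _ _ hDr1, cancel _ _ _ hBTinv, cancel _ _ _ hBinv]
  have hVcE : Vc * E * Vcᵀ = Dr * (P * Dr) := by
    rw [hVcT, hVc, ← hBEB]
    simp only [Matrix.mul_assoc]
  have hJ : J = Dr := by
    have hfun : (fun k => Real.sqrt ((Vc * E * Vcᵀ) k k)) = fun k => (r k)⁻¹ := by
      funext k
      rw [hVcE, hDrdef, Matrix.diagonal_mul, Matrix.mul_diagonal, hPdiag, one_mul,
        Real.sqrt_mul_self (inv_nonneg.mpr (hr k).le)]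
    rw [hJdef, hfun, hDrdef]
  have hZ : Z = Θ * Pim := by
    rw [hZdef, hYb, hJ]
    simp only [Matrix.mul_assoc]
    rw [hDr2, Matrix.mul_one]
  refine ⟨⟨θ, hθ, by rw [hZ, hΘ]⟩, ?_⟩
  intro i k
  have hZik : ∀ l, Z i l = θ i * Pim i l := by
    intro l; rw [hZ, hΘ, Matrix.diagonal_mul]
  have hsum : ∑ l, |Z i l| = θ i := by
    have habs : ∀ l ∈ Finset.univ, |Z i l| = θ i * Pim i l := fun l _ => by
      rw [hZik l]; exact abs_of_nonneg (mul_nonneg (hθ i).le (hnonneg i l))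
    rw [Finset.sum_congr rfl habs, ← Finset.mul_sum, hrowsum, mul_one]
  rw [hZik k, hsum, mul_comm, mul_div_assoc, div_self (hθ i).ne', mul_one]
end

section
/- Let V ∈ ℝ^{n×K} satisfy V'V = I_K with every row of V nonzero, let I = (i_1,…,i_K) be row indices such that V(I,:) is invertible, and set V₂ = V V'. Then: (1) ‖V₂(i,:)‖₂ = ‖V(i,:)‖₂ for every i, i.e. N_{V₂} = N_V; (2) V_{*,2} = V_{*,1} V' and V_{*,2}(I,:) = V_{*,1}(I,:) V'; (3) V_{*,2}(I,:) V_{*,2}(I,:)' = V_{*,1}(I,:) V_{*,1}(I,:)'; (4) V_{*,2} V_{*,2}(I,:)' (V_{*,2}(I,:) V_{*,2}(I,:)')^{-1} = V_{*,1} V_{*,1}(I,:)' (V_{*,1}(I,:) V_{*,1}(I,:)')^{-1}; and (5) V₂ V_{*,2}(I,:)' (V_{*,2}(I,:) V_{*,2}(I,:)')^{-1} = V V_{*,1}(I,:)' (V_{*,1}(I,:) V_{*,1}(I,:)')^{-1}. -/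
open Matrix

/-- **Equivalence of the two normalizations.** For `V` with orthonormal columns,
nonzero rows, and invertible corner submatrix `V(I,:)`, setting `V₂ = V V'`:
(1) `‖V₂(i,:)‖ = ‖V(i,:)‖` for all `i` (i.e. `N_{V₂} = N_V`);
(2) `V₂₊ = V₊ V'` and `V₂₊(I,:) = V₊(I,:) V'`;
(3) `V₂₊(I,:) V₂₊(I,:)' = V₊(I,:) V₊(I,:)'`;
(4) `V₂₊ V₂₊(I,:)' (V₂₊(I,:) V₂₊(I,:)')⁻¹ = V₊ V₊(I,:)' (V₊(I,:) V₊(I,:)')⁻¹`;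
(5) `V₂ V₂₊(I,:)' (V₂₊(I,:) V₂₊(I,:)')⁻¹ = V V₊(I,:)' (V₊(I,:) V₊(I,:)')⁻¹`. -/
theorem equivalence_of_normalizations {n K : ℕ} (hK : 1 ≤ K) (hKn : K ≤ n)
    (V : Matrix (Fin n) (Fin K) ℝ)
    (hVorth : Vᵀ * V = 1)
    (hrows : ∀ i, V i ≠ 0)
    (I : Fin K → Fin n)
    (hVI : IsUnit (V.submatrix I id)) :
    let V2 := V * Vᵀ
    let S1 := (rowNormalize V).submatrix I id
    let S2 := (rowNormalize V2).submatrix I id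
    (∀ i, rnorm (V2 i) = rnorm (V i)) ∧
    (rowNormalize V2 = rowNormalize V * Vᵀ ∧ S2 = S1 * Vᵀ) ∧
    S2 * S2ᵀ = S1 * S1ᵀ ∧
    rowNormalize V2 * S2ᵀ * (S2 * S2ᵀ)⁻¹ = rowNormalize V * S1ᵀ * (S1 * S1ᵀ)⁻¹ ∧
    V2 * S2ᵀ * (S2 * S2ᵀ)⁻¹ = V * S1ᵀ * (S1 * S1ᵀ)⁻¹ := by
  intro V2 S1 S2
  -- idempotence of V2
  have hidem : V2 * V2 = V2 := by
    show (V * Vᵀ) * (V * Vᵀ) = V * Vᵀ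
    rw [Matrix.mul_assoc, ← Matrix.mul_assoc Vᵀ, hVorth, Matrix.one_mul]
  -- symmetry of V2
  have hsymm : ∀ i j, V2 i j = V2 j i := by
    intro i j
    show (V * Vᵀ) i j = (V * Vᵀ) j i
    simp [Matrix.mul_apply, Matrix.transpose_apply, mul_comm]
  -- (1)
  have h1 : ∀ i, rnorm (V2 i) = rnorm (V i) := by
    intro i
    unfold rnorm
    congr 1
    have : ∑ j, V2 i j ^ 2 = (V2 * V2) i i := by
      rw [Matrix.mul_apply]
      exact Finset.sum_congr rfl fun j _ => by rw [sq, hsymm i j]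
    rw [this, hidem]
    show (V * Vᵀ) i i = _
    rw [Matrix.mul_apply]
    exact Finset.sum_congr rfl fun k _ => by rw [Matrix.transpose_apply, sq]
  -- (2a)
  have h2a : rowNormalize V2 = rowNormalize V * Vᵀ := by
    ext i j
    show V2 i j / rnorm (V2 i) = ∑ k, (V i k / rnorm (V i)) * Vᵀ k j
    rw [h1 i]
    show (V * Vᵀ) i j / rnorm (V i) = _
    rw [Matrix.mul_apply, Finset.sum_div]
    exact Finset.sum_congr rfl fun k _ => (div_mul_eq_mul_div _ _ _).symm
  -- (2b)
  have h2b : S2 = S1 * Vᵀ := by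
    show (rowNormalize V2).submatrix I id = _
    rw [h2a]
    rfl
  -- (3)
  have h3 : S2 * S2ᵀ = S1 * S1ᵀ := by
    rw [h2b, Matrix.transpose_mul, Matrix.transpose_transpose, Matrix.mul_assoc,
      ← Matrix.mul_assoc Vᵀ, hVorth, Matrix.one_mul]
  -- (4)
  have h4a : rowNormalize V2 * S2ᵀ = rowNormalize V * S1ᵀ := by
    rw [h2a, h2b, Matrix.transpose_mul, Matrix.transpose_transpose, Matrix.mul_assoc,
      ← Matrix.mul_assoc Vᵀ, hVorth, Matrix.one_mul]
  -- (5)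
  have h5a : V2 * S2ᵀ = V * S1ᵀ := by
    show (V * Vᵀ) * S2ᵀ = _
    rw [h2b, Matrix.transpose_mul, Matrix.transpose_transpose, Matrix.mul_assoc,
      ← Matrix.mul_assoc Vᵀ, hVorth, Matrix.one_mul]
  exact ⟨h1, ⟨h2a, h2b⟩, h3, by rw [h4a, h3], by rw [h5a, h3]⟩
end

section
/- Suppose V = Θ̃ Π Θ̃(I,I)^{-1} V(I,:) with V'V = I_K, where Π is a membership matrix with pure-node index tuple I (Π(I,:) = I_K), Θ̃ is diagonal with strictly positive diagonal, every row of V is nonzero, and V(I,:) is invertible. Then for every i ∈ {1,…,n} there exist a real number r(i) ≥ 1 and a row vector Φ(i,:) ∈ ℝ^K with nonnegative entries summing to 1 such that V_{*,1}(i,:) = r(i) Φ(i,:) V_{*,1}(I,:). Moreover, if node i is pure with Π(i,k) = 1, then r(i) = 1 and Φ(i,:) = e_k'. -/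
open Matrix

lemma rnorm_smul_s8 {m : ℕ} {a : ℝ} (ha : 0 ≤ a) (v : Fin m → ℝ) :
    rnorm (a • v) = a * rnorm v := by
  unfold rnorm
  have : ∑ j, (a • v) j ^ 2 = a ^ 2 * ∑ j, v j ^ 2 := by
    simp [Finset.mul_sum, mul_pow]
  rw [this, Real.sqrt_mul (sq_nonneg a), Real.sqrt_sq ha]

lemma rnorm_eq {m : ℕ} (v : Fin m → ℝ) :
    rnorm v = ‖(WithLp.equiv 2 (Fin m → ℝ)).symm v‖ := by
  rw [EuclideanSpace.norm_eq]
  simp [rnorm, Real.norm_eq_abs, sq_abs]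

lemma rnorm_sum_le {m K : ℕ} (u : Fin K → Fin m → ℝ) :
    rnorm (∑ k, u k) ≤ ∑ k, rnorm (u k) := by
  simp only [rnorm_eq]
  have : (WithLp.equiv 2 (Fin m → ℝ)).symm (∑ k, u k)
      = ∑ k, (WithLp.equiv 2 (Fin m → ℝ)).symm (u k) := by
    ext j; simp [Finset.sum_apply]
  rw [this]
  exact norm_sum_le _ _

/-- **scaled convex combinations.** Under the ideal setup each row of the
row-normalized `V₊` is a scaled convex combination of the corner rows:
`V₊(i,:) = r(i) Φ(i,:) V₊(I,:)` with `r(i) ≥ 1` and `Φ(i,:)` a probability row vector;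
if `i` is pure with `Π(i,k) = 1`, then `r(i) = 1` and `Φ(i,:) = e_k'`. -/
theorem rows_scaled_convex_combination {n K : ℕ} (hK : 1 ≤ K) (hKn : K ≤ n)
    (Pim : Matrix (Fin n) (Fin K) ℝ)
    (hnonneg : ∀ i k, 0 ≤ Pim i k)
    (hrowsum : ∀ i, ∑ k, Pim i k = 1)
    (I : Fin K → Fin n)
    (hpure : ∀ k l, Pim (I k) l = if l = k then (1 : ℝ) else 0)
    (θ : Fin n → ℝ) (hθ : ∀ i, 0 < θ i)
    (V : Matrix (Fin n) (Fin K) ℝ)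
    (hVorth : Vᵀ * V = 1)
    (hVdef : V = Matrix.diagonal θ * Pim *
      (Matrix.diagonal (fun k => (θ (I k))⁻¹) * V.submatrix I id))
    (hrows : ∀ i, V i ≠ 0)
    (hVI : IsUnit (V.submatrix I id)) :
    ∀ i : Fin n, ∃ (r : ℝ) (φ : Fin K → ℝ),
      1 ≤ r ∧ (∀ k, 0 ≤ φ k) ∧ (∑ k, φ k = 1) ∧
      rowNormalize V i = r • Matrix.vecMul φ ((rowNormalize V).submatrix I id) ∧
      (∀ k, Pim i k = 1 → r = 1 ∧ φ = fun l => if l = k then 1 else 0) := by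
  intro i
  set c : Fin K → ℝ := fun k => θ i * Pim i k * (θ (I k))⁻¹ with hc
  have hck : ∀ k, 0 ≤ c k := fun k =>
    mul_nonneg (mul_nonneg (hθ i).le (hnonneg i k)) (inv_nonneg.2 (hθ (I k)).le)
  have hVi : V i = ∑ k, c k • V (I k) := by
    funext j
    rw [Finset.sum_apply]
    conv_lhs => rw [hVdef]
    simp only [Matrix.mul_apply, Matrix.diagonal_apply, Matrix.submatrix_apply, id,
      Pi.smul_apply, smul_eq_mul, ite_mul, zero_mul, Finset.sum_ite_eq, Finset.mem_univ,
      if_true]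
    exact Finset.sum_congr rfl fun k _ => by ring
  set N : Fin K → ℝ := fun k => rnorm (V (I k)) with hN
  have hNpos : ∀ k, 0 < N k := fun k => rnorm_pos (hrows (I k))
  have hNipos : 0 < rnorm (V i) := rnorm_pos (hrows i)
  set S : ℝ := ∑ k, c k * N k with hS
  have hStri : rnorm (V i) ≤ S := by
    rw [hVi]
    calc rnorm (∑ k, c k • V (I k)) ≤ ∑ k, rnorm (c k • V (I k)) := rnorm_sum_le _
      _ = S := Finset.sum_congr rfl fun k _ => rnorm_smul_s8 (hck k) _
  have hSpos : 0 < S := lt_of_lt_of_le hNipos hStri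
  refine ⟨S / rnorm (V i), fun k => c k * N k / S, ?_, ?_, ?_, ?_, ?_⟩
  · exact (one_le_div hNipos).2 hStri
  · exact fun k => div_nonneg (mul_nonneg (hck k) (hNpos k).le) hSpos.le
  · rw [← Finset.sum_div, ← hS, div_self hSpos.ne']
  · funext j
    have hrnV : ∀ l j', rowNormalize V (I l) j' = V (I l) j' / N l := fun l j' => rfl
    simp only [Pi.smul_apply, Matrix.vecMul, dotProduct, Matrix.submatrix_apply, id,
      smul_eq_mul, rowNormalize, Matrix.of_apply]
    rw [Finset.mul_sum]
    have hViL : V i j = ∑ k, c k * V (I k) j := by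
      rw [hVi]; simp [Finset.sum_apply]
    rw [hViL, Finset.sum_div]
    refine Finset.sum_congr rfl fun k _ => ?_
    field_simp [hSpos.ne', (hNpos k).ne', hNipos.ne']
    show _ = c k * V (I k) j * N k * (N k)⁻¹
    rw [mul_assoc (c k * V (I k) j), mul_inv_cancel₀ (hNpos k).ne', mul_one]
  · intro k hk
    have hzero : ∀ l, l ≠ k → Pim i l = 0 := by
      intro l hl
      have h2 : ∑ l ∈ Finset.univ.erase k, Pim i l = 0 := by
        have h3 := Finset.add_sum_erase Finset.univ (Pim i) (Finset.mem_univ k)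
        rw [hrowsum i, hk] at h3
        linarith
      exact (Finset.sum_eq_zero_iff_of_nonneg fun l _ => hnonneg i l).1 h2 l
        (Finset.mem_erase.2 ⟨hl, Finset.mem_univ l⟩)
    have hcl : ∀ l, l ≠ k → c l = 0 := by
      intro l hl; simp [hc, hzero l hl]
    have hVik : V i = c k • V (I k) := by
      rw [hVi]
      rw [Finset.sum_eq_single k]
      · intro l _ hl; rw [hcl l hl, zero_smul]
      · intro h; exact absurd (Finset.mem_univ k) h
    have hNik : rnorm (V i) = c k * N k := by
      rw [hVik, rnorm_smul_s8 (hck k)]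
    have hSk : S = c k * N k := by
      rw [hS, Finset.sum_eq_single k]
      · intro l _ hl; rw [hcl l hl, zero_mul]
      · intro h; exact absurd (Finset.mem_univ k) h
    have hckNk : S = rnorm (V i) := by rw [hSk, hNik]
    constructor
    · rw [hckNk, div_self hNipos.ne']
    · funext l
      by_cases hl : l = k
      · subst hl
        rw [← hSk, hckNk, div_self hNipos.ne', if_pos rfl]
      · rw [hcl l hl, zero_mul, zero_div, if_neg hl]
end

section
/- Suppose V = Θ̃ Π Θ̃(I,I)^{-1} V(I,:) with V'V = I_K, where Π is a rank-K membership matrix with pure-node index tuple I (Π(I,:) = I_K) and Θ̃ is diagonal with diagonal entries θ̃(i) ∈ [θ̃_min, θ̃_max], θ̃_min > 0. Let λ₁(Π'Π) and λ_K(Π'Π) denote the largest and smallest eigenvalues of the positive definite matrix Π'Π. Then for every i ∈ {1,…,n}, θ̃_min/(θ̃_max √(K λ₁(Π'Π))) ≤ ‖V(i,:)‖₂ ≤ θ̃_max/(θ̃_min √(λ_K(Π'Π))). -/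
open Matrix

lemma quad_form_bounds {K : ℕ} {A : Matrix (Fin K) (Fin K) ℝ}
    (hA : A.IsHermitian) (x : Fin K → ℝ) [Nonempty (Fin K)] :
    (⨅ k, hA.eigenvalues k) * (∑ j, x j ^ 2) ≤ x ⬝ᵥ (A *ᵥ x) ∧
      x ⬝ᵥ (A *ᵥ x) ≤ (⨆ k, hA.eigenvalues k) * (∑ j, x j ^ 2) := by
  set U : Matrix (Fin K) (Fin K) ℝ := (hA.eigenvectorUnitary : Matrix (Fin K) (Fin K) ℝ) with hUdef
  have hU1 : U * star U = 1 := Matrix.mem_unitaryGroup_iff.mp hA.eigenvectorUnitary.2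
  have hstar : star U = Uᵀ := by
    ext i j; simp [Matrix.star_eq_conjTranspose, Matrix.conjTranspose_apply]
  set c : Fin K → ℝ := Uᵀ *ᵥ x with hc
  have hx : U *ᵥ c = x := by
    rw [hc, Matrix.mulVec_mulVec, ← hstar, hU1, Matrix.one_mulVec]
  have hdiag : Uᵀ * A * U = Matrix.diagonal hA.eigenvalues := by
    have := hA.conjStarAlgAut_star_eigenvectorUnitary
    rw [Unitary.conjStarAlgAut_star_apply, ← hUdef, hstar] at this
    exact this
  have key : x ⬝ᵥ (A *ᵥ x) = ∑ k, hA.eigenvalues k * c k ^ 2 := by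
    conv_lhs => rw [← hx]
    rw [Matrix.dotProduct_mulVec, Matrix.dotProduct_mulVec, Matrix.vecMul_mulVec,
      Matrix.vecMul_vecMul, hdiag]
    simp [dotProduct, Matrix.vecMul_diagonal, sq]
    exact Finset.sum_congr rfl fun k _ => by ring
  have hnorm : ∑ k, c k ^ 2 = ∑ j, x j ^ 2 := by
    have h1 : c ⬝ᵥ c = x ⬝ᵥ x := by
      rw [hc, Matrix.dotProduct_mulVec, Matrix.vecMul_mulVec, Matrix.transpose_transpose,
        ← hstar, hU1, Matrix.vecMul_one]
    simpa [dotProduct, sq] using h1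
  have hbdd : BddAbove (Set.range hA.eigenvalues) := (Set.finite_range _).bddAbove
  have hbddb : BddBelow (Set.range hA.eigenvalues) := (Set.finite_range _).bddBelow
  constructor
  · rw [key, ← hnorm, Finset.mul_sum]
    exact Finset.sum_le_sum fun k _ =>
      mul_le_mul_of_nonneg_right (ciInf_le hbddb k) (sq_nonneg _)
  · rw [key, ← hnorm, Finset.mul_sum]
    exact Finset.sum_le_sum fun k _ =>
      mul_le_mul_of_nonneg_right (le_ciSup hbdd k) (sq_nonneg _)


/-- **delocalization of population eigenvectors.** Under the ideal setup, with
`Θ̃`'s diagonal entries in `[θmin, θmax]` (`θmin > 0`), every row of `V` satisfies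
`θmin/(θmax √(K λ₁(Π'Π))) ≤ ‖V(i,:)‖ ≤ θmax/(θmin √(λ_K(Π'Π)))`, where `λ₁` and `λ_K`
are the largest and smallest eigenvalues of `Π'Π`. -/
theorem row_norm_bounds {n K : ℕ} (hK : 1 ≤ K) (hKn : K ≤ n)
    (Pim : Matrix (Fin n) (Fin K) ℝ)
    (hnonneg : ∀ i k, 0 ≤ Pim i k)
    (hrowsum : ∀ i, ∑ k, Pim i k = 1)
    (hrank : Pim.rank = K)
    (I : Fin K → Fin n)
    (hpure : ∀ k l, Pim (I k) l = if l = k then (1 : ℝ) else 0)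
    (θ : Fin n → ℝ) (θmin θmax : ℝ) (hθmin : 0 < θmin)
    (hθ : ∀ i, θmin ≤ θ i ∧ θ i ≤ θmax)
    (V : Matrix (Fin n) (Fin K) ℝ)
    (hVorth : Vᵀ * V = 1)
    (hVdef : V = Matrix.diagonal θ * Pim *
      (Matrix.diagonal (fun k => (θ (I k))⁻¹) * V.submatrix I id))
    (hH : (Pimᵀ * Pim).IsHermitian) :
    ∀ i : Fin n,
      θmin / (θmax * Real.sqrt (K * ⨆ k, hH.eigenvalues k)) ≤ rnorm (V i) ∧
      rnorm (V i) ≤ θmax / (θmin * Real.sqrt (⨅ k, hH.eigenvalues k)) := by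
  classical
  haveI : Nonempty (Fin K) := ⟨⟨0, hK⟩⟩
  have hKpos' : (0:ℝ) < (K:ℝ) := by exact_mod_cast hK
  set lam1 := ⨆ k, hH.eigenvalues k with hl1
  set lamK := ⨅ k, hH.eigenvalues k with hlK
  -- injectivity of Pim from rank
  have hker : LinearMap.ker Pim.mulVecLin = ⊥ := by
    have h1 : Pim.rank + Module.finrank ℝ (LinearMap.ker Pim.mulVecLin)
        = Module.finrank ℝ (Fin K → ℝ) := LinearMap.finrank_range_add_finrank_ker Pim.mulVecLin
    rw [hrank] at h1
    have h2 : Module.finrank ℝ (Fin K → ℝ) = K := by simp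
    rw [h2] at h1
    exact Submodule.finrank_eq_zero.mp (by omega)
  have hinj : ∀ v : Fin K → ℝ, Pim *ᵥ v = 0 → v = 0 :=
    Matrix.ker_mulVecLin_eq_bot_iff.mp hker
  -- positive definiteness and eigenvalue positivity
  have hPD : (Pimᵀ * Pim).PosDef := by
    refine Matrix.PosDef.of_dotProduct_mulVec_pos hH fun x hx => ?_
    have hq : star x ⬝ᵥ ((Pimᵀ * Pim) *ᵥ x) = ∑ j, (Pim *ᵥ x) j ^ 2 := by
      rw [star_trivial, ← Matrix.mulVec_mulVec, Matrix.dotProduct_mulVec,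
        Matrix.vecMul_transpose]
      simp [dotProduct, sq]
    rw [hq]
    have hPx : Pim *ᵥ x ≠ 0 := fun h => hx (hinj x h)
    obtain ⟨j, hj⟩ := Function.ne_iff.mp hPx
    have hj' : (Pim *ᵥ x) j ≠ 0 := by simpa using hj
    exact Finset.sum_pos' (fun j _ => sq_nonneg _)
      ⟨j, Finset.mem_univ j, pow_two_pos_of_ne_zero hj'⟩
  have heig : ∀ k, 0 < hH.eigenvalues k := fun k => hPD.eigenvalues_pos k
  obtain ⟨k0, hk0⟩ := Finite.exists_min hH.eigenvalues
  have hlamK : 0 < lamK := lt_of_lt_of_le (heig k0) (le_ciInf hk0)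
  have hlamle : lamK ≤ lam1 :=
    le_trans (ciInf_le ((Set.finite_range _).bddBelow) k0)
      (le_ciSup ((Set.finite_range _).bddAbove) k0)
  have hlam1 : 0 < lam1 := lt_of_lt_of_le hlamK hlamle
  set B := Matrix.diagonal θ * Pim with hB
  set M := Matrix.diagonal (fun k => (θ (I k))⁻¹) * V.submatrix I id with hM
  set G := Bᵀ * B with hG
  have hMGM : Mᵀ * G * M = 1 := by
    calc Mᵀ * G * M = (B * M)ᵀ * (B * M) := by
          rw [hG]; simp only [Matrix.transpose_mul, Matrix.mul_assoc]
    _ = 1 := by rw [← hVdef]; exact hVorth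
  have hGMM : G * (M * Mᵀ) = 1 := by
    rw [mul_eq_one_comm]
    have h2 : M * (Mᵀ * G) = 1 := mul_eq_one_comm.mp hMGM
    calc M * Mᵀ * G = M * (Mᵀ * G) := by rw [Matrix.mul_assoc]
    _ = 1 := h2
  have hBv : ∀ z : Fin K → ℝ, B *ᵥ z = fun j => θ j * (Pim *ᵥ z) j := by
    intro z; ext j; rw [hB, ← Matrix.mulVec_mulVec, Matrix.mulVec_diagonal]
  have hqG : ∀ z : Fin K → ℝ, z ⬝ᵥ (G *ᵥ z) = ∑ j, (B *ᵥ z) j ^ 2 := by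
    intro z
    rw [hG, ← Matrix.mulVec_mulVec, Matrix.dotProduct_mulVec, Matrix.vecMul_transpose]
    simp [dotProduct, sq]
  have hqP : ∀ z : Fin K → ℝ, z ⬝ᵥ ((Pimᵀ * Pim) *ᵥ z) = ∑ j, (Pim *ᵥ z) j ^ 2 := by
    intro z
    rw [← Matrix.mulVec_mulVec, Matrix.dotProduct_mulVec, Matrix.vecMul_transpose]
    simp [dotProduct, sq]
  have hsqueeze : ∀ z : Fin K → ℝ,
      θmin^2 * (z ⬝ᵥ ((Pimᵀ * Pim) *ᵥ z)) ≤ z ⬝ᵥ (G *ᵥ z) ∧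
        z ⬝ᵥ (G *ᵥ z) ≤ θmax^2 * (z ⬝ᵥ ((Pimᵀ * Pim) *ᵥ z)) := by
    intro z
    rw [hqG, hqP, hBv z, Finset.mul_sum, Finset.mul_sum]
    constructor
    · refine Finset.sum_le_sum fun j _ => ?_
      have h := hθ j
      rw [mul_pow]
      have : θmin^2 ≤ θ j ^2 := pow_le_pow_left₀ hθmin.le h.1 2
      nlinarith [sq_nonneg ((Pim *ᵥ z) j)]
    · refine Finset.sum_le_sum fun j _ => ?_
      have h := hθ j
      rw [mul_pow]
      have : θ j^2 ≤ θmax ^2 := pow_le_pow_left₀ (hθmin.le.trans h.1) h.2 2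
      nlinarith [sq_nonneg ((Pim *ᵥ z) j)]
  intro i
  set π : Fin K → ℝ := Pim i with hπ
  set w : Fin K → ℝ := Mᵀ *ᵥ π with hw
  set u : Fin K → ℝ := M *ᵥ w with hu
  set s := ∑ k, w k ^ 2 with hs
  set t := ∑ k, π k ^ 2 with ht
  have hθi := hθ i
  have hθipos : 0 < θ i := lt_of_lt_of_le hθmin hθi.1
  have hθmaxpos : 0 < θmax := hθipos.trans_le hθi.2
  have hVi : ∀ k, V i k = θ i * w k := by
    intro k
    rw [hVdef]
    show ∑ l, B i l * M l k = θ i * w k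
    calc ∑ l, B i l * M l k = ∑ l, θ i * (Pim i l * M l k) := by
          refine Finset.sum_congr rfl fun l _ => ?_
          rw [hB, Matrix.diagonal_mul, mul_assoc]
    _ = θ i * ∑ l, Pim i l * M l k := (Finset.mul_sum _ _ _).symm
    _ = θ i * w k := by
          rw [hw]; congr 1
          simp [Matrix.mulVec, dotProduct, Matrix.transpose_apply, mul_comm, hπ]
  have hrn : rnorm (V i) = Real.sqrt (θ i ^2 * s) := by
    rw [rnorm]
    congr 1
    rw [hs, Finset.mul_sum]
    exact Finset.sum_congr rfl fun j _ => by rw [hVi j, mul_pow]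
  have hGu : G *ᵥ u = π := by
    rw [hu, hw, Matrix.mulVec_mulVec, Matrix.mulVec_mulVec, Matrix.mul_assoc, hGMM,
      Matrix.one_mulVec]
  have hsu : u ⬝ᵥ π = s := by
    rw [hu, dotProduct_comm, Matrix.dotProduct_mulVec, ← Matrix.mulVec_transpose, ← hw]
    simp [dotProduct, hs, sq]
  have hs0 : 0 ≤ s := Finset.sum_nonneg fun k _ => sq_nonneg _
  have ht0 : 0 ≤ t := Finset.sum_nonneg fun k _ => sq_nonneg _
  have htK : 1 ≤ (K:ℝ) * t := by
    have h := Finset.sum_mul_sq_le_sq_mul_sq Finset.univ π (fun _ => (1:ℝ))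
    simp only [mul_one, one_pow, Finset.sum_const, Finset.card_univ, Fintype.card_fin,
      nsmul_eq_mul] at h
    rw [hπ] at h
    rw [hrowsum i] at h
    rw [one_pow] at h
    calc (1:ℝ) ≤ (∑ k, π k ^2) * K := h
    _ = (K:ℝ) * t := by rw [ht]; ring
  have ht1 : t ≤ 1 := by
    have : ∀ l, π l ^ 2 ≤ π l := by
      intro l
      have h1 : π l ≤ 1 := by
        rw [← hrowsum i]
        exact Finset.single_le_sum (fun j _ => hnonneg i j) (Finset.mem_univ l)
      nlinarith [hnonneg i l]
    calc t ≤ ∑ l, π l := Finset.sum_le_sum fun l _ => this l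
    _ = 1 := hrowsum i
  have htpos : 0 < t := by
    rcases lt_or_ge 0 t with h|h
    · exact h
    · exfalso
      have : (K:ℝ)*t ≤ 0 := mul_nonpos_of_nonneg_of_nonpos hKpos'.le h
      linarith
  have hupper : s * (θmin^2 * lamK) ≤ t := by
    by_cases hsz : s = 0
    · rw [hsz, zero_mul]; exact ht0
    · have hspos : 0 < s := lt_of_le_of_ne hs0 (Ne.symm hsz)
      have h2 := (hsqueeze u).1
      have h3 := (quad_form_bounds hH u).1
      have h4 : u ⬝ᵥ (G *ᵥ u) = s := by rw [hGu]; exact hsu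
      have h1 : θmin^2 * (lamK * (∑ k, u k ^2)) ≤ s := by
        rw [← h4]
        calc θmin^2 * (lamK * ∑ k, u k^2) ≤ θmin^2 * (u ⬝ᵥ ((Pimᵀ * Pim) *ᵥ u)) :=
              mul_le_mul_of_nonneg_left h3 (by positivity)
        _ ≤ u ⬝ᵥ (G *ᵥ u) := h2
      have hCS : s^2 ≤ (∑ k, u k^2) * t := by
        have h := Finset.sum_mul_sq_le_sq_mul_sq Finset.univ u π
        have h5 : ∑ l, u l * π l = s := hsu
        rw [h5] at h
        exact h
      have h5 : s * (s * (θmin^2*lamK)) ≤ s * t := by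
        calc s * (s * (θmin^2*lamK)) = (θmin^2*lamK) * s^2 := by ring
        _ ≤ (θmin^2*lamK) * ((∑ k, u k^2)*t) := mul_le_mul_of_nonneg_left hCS (mul_nonneg (sq_nonneg _) hlamK.le)
        _ = (θmin^2 * (lamK * (∑ k, u k^2)))*t := by ring
        _ ≤ s*t := mul_le_mul_of_nonneg_right h1 ht0
      exact (mul_le_mul_iff_right₀ hspos).mp h5
  have hlowert : t ≤ s * (θmax^2 * lam1) := by
    have h2 := (hsqueeze π).2
    have h3 := (quad_form_bounds hH π).2
    have hqGπ : ∑ j, (B *ᵥ π) j ^2 ≤ θmax^2 * (lam1 * t) := by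
      calc ∑ j, (B *ᵥ π) j^2 = π ⬝ᵥ (G *ᵥ π) := (hqG π).symm
      _ ≤ θmax^2 * (π ⬝ᵥ ((Pimᵀ * Pim) *ᵥ π)) := h2
      _ ≤ θmax^2 * (lam1 * t) := mul_le_mul_of_nonneg_left h3 (by positivity)
    have htBB : t = (B *ᵥ u) ⬝ᵥ (B *ᵥ π) := by
      have h4 : π ⬝ᵥ π = t := by simp [dotProduct, ht, sq]
      calc t = π ⬝ᵥ π := h4.symm
      _ = (G *ᵥ u) ⬝ᵥ π := by rw [hGu]
      _ = (B *ᵥ u) ⬝ᵥ (B *ᵥ π) := by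
          rw [hG, ← Matrix.mulVec_mulVec, dotProduct_comm, Matrix.dotProduct_mulVec,
            Matrix.vecMul_transpose]
          exact dotProduct_comm _ _
    have hsB : ∑ j, (B *ᵥ u) j ^2 = s := by
      rw [← hqG u, hGu]; exact hsu
    have hCS2 : t^2 ≤ s * (θmax^2 * (lam1 * t)) := by
      have h := Finset.sum_mul_sq_le_sq_mul_sq Finset.univ (B *ᵥ u) (B *ᵥ π)
      have h6 : ∑ l, (B *ᵥ u) l * (B *ᵥ π) l = t := htBB.symm
      rw [h6, hsB] at h
      calc t^2 ≤ s * ∑ j, (B *ᵥ π) j ^2 := h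
      _ ≤ s * (θmax^2 * (lam1 * t)) := mul_le_mul_of_nonneg_left hqGπ hs0
    have h7 : t * t ≤ t * (s * (θmax^2*lam1)) := by
      calc t*t = t^2 := by ring
      _ ≤ s * (θmax^2*(lam1*t)) := hCS2
      _ = t * (s*(θmax^2*lam1)) := by ring
    exact (mul_le_mul_iff_right₀ htpos).mp h7
  constructor
  · rw [hrn]
    have hKl : 0 < (K:ℝ)*lam1 := mul_pos hKpos' hlam1
    have hx0 : 0 ≤ θmin / (θmax*Real.sqrt ((K:ℝ)*lam1)) :=
      (div_pos hθmin (mul_pos hθmaxpos (Real.sqrt_pos.mpr hKl))).le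
    have hy0 : 0 ≤ θ i^2 * s := mul_nonneg (sq_nonneg _) hs0
    apply (Real.le_sqrt hx0 hy0).mpr
    have hsq : (θmin/(θmax*Real.sqrt ((K:ℝ)*lam1)))^2 = θmin^2/(θmax^2*((K:ℝ)*lam1)) := by
      rw [div_pow, mul_pow, Real.sq_sqrt hKl.le]
    rw [hsq, div_le_iff₀ (mul_pos (pow_pos hθmaxpos 2) hKl)]
    have c1 : 1 ≤ (K:ℝ) * (s*(θmax^2*lam1)) :=
      le_trans htK (mul_le_mul_of_nonneg_left hlowert hKpos'.le)
    have c2 : θmin^2 * 1 ≤ θ i^2 * ((K:ℝ)*(s*(θmax^2*lam1))) :=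
      mul_le_mul (pow_le_pow_left₀ hθmin.le hθi.1 2) c1 zero_le_one (sq_nonneg _)
    calc θmin^2 = θmin^2 * 1 := by ring
    _ ≤ θ i^2 * ((K:ℝ)*(s*(θmax^2*lam1))) := c2
    _ = θ i^2 * s * (θmax^2*((K:ℝ)*lam1)) := by ring
  · rw [hrn]
    have hb : 0 ≤ θmax/(θmin*Real.sqrt lamK) :=
      (div_pos hθmaxpos (mul_pos hθmin (Real.sqrt_pos.mpr hlamK))).le
    rw [show θmax/(θmin*Real.sqrt lamK) = Real.sqrt ((θmax/(θmin*Real.sqrt lamK))^2) from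
      (Real.sqrt_sq hb).symm]
    apply Real.sqrt_le_sqrt
    have hsq2 : (θmax/(θmin*Real.sqrt lamK))^2 = θmax^2/(θmin^2*lamK) := by
      rw [div_pow, mul_pow, Real.sq_sqrt hlamK.le]
    rw [hsq2, le_div_iff₀ (mul_pos (pow_pos hθmin 2) hlamK)]
    have c3 : θ i^2 ≤ θmax^2 := pow_le_pow_left₀ hθipos.le hθi.2 2
    have d1 : θ i^2 * (s*(θmin^2*lamK)) ≤ θmax^2 * t :=
      mul_le_mul c3 hupper (mul_nonneg hs0 (mul_nonneg (sq_nonneg _) hlamK.le)) (sq_nonneg θmax)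
    calc θ i^2 * s * (θmin^2*lamK) = θ i^2 * (s*(θmin^2*lamK)) := by ring
    _ ≤ θmax^2 * t := d1
    _ ≤ θmax^2 * 1 := mul_le_mul_of_nonneg_left ht1 (sq_nonneg _)
    _ = θmax^2 := by ring
end

section
/- Suppose V = Θ̃ Π B with V'V = I_K, where B = Θ̃(I,I)^{-1} V(I,:) is invertible, Π is a rank-K membership matrix with pure-node index tuple I (Π(I,:) = I_K), and Θ̃ is diagonal with strictly positive diagonal. Then B B' = (Π' Θ̃² Π)^{-1}; equivalently, (Θ̃(I,I)^{-1} V(I,:))(Θ̃(I,I)^{-1} V(I,:))' is the inverse of the positive definite matrix Π' Θ̃² Π. -/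
open Matrix

/-- If `V = Θ̃ Π B` with `V'V = I_K` and `B = Θ̃(I,I)⁻¹ V(I,:)` invertible,
`Π` a rank-`K` membership matrix with pure tuple `I`, `Θ̃` diagonal positive, then
`Π' Θ̃² Π` is invertible and `B B' = (Π' Θ̃² Π)⁻¹`. -/
theorem BBt_eq_inverse_gram {n K : ℕ} (hK : 1 ≤ K) (hKn : K ≤ n)
    (Pim : Matrix (Fin n) (Fin K) ℝ)
    (hnonneg : ∀ i k, 0 ≤ Pim i k)
    (hrowsum : ∀ i, ∑ k, Pim i k = 1)
    (hrank : Pim.rank = K)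
    (I : Fin K → Fin n)
    (hpure : ∀ k l, Pim (I k) l = if l = k then (1 : ℝ) else 0)
    (θ : Fin n → ℝ) (hθ : ∀ i, 0 < θ i)
    (V : Matrix (Fin n) (Fin K) ℝ)
    (hVorth : Vᵀ * V = 1)
    (hB : IsUnit (Matrix.diagonal (fun k => (θ (I k))⁻¹) * V.submatrix I id))
    (hVdef : V = Matrix.diagonal θ * Pim *
      (Matrix.diagonal (fun k => (θ (I k))⁻¹) * V.submatrix I id)) :
    IsUnit (Pimᵀ * Matrix.diagonal (fun i => θ i ^ 2) * Pim) ∧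
    (Matrix.diagonal (fun k => (θ (I k))⁻¹) * V.submatrix I id) *
        (Matrix.diagonal (fun k => (θ (I k))⁻¹) * V.submatrix I id)ᵀ =
      (Pimᵀ * Matrix.diagonal (fun i => θ i ^ 2) * Pim)⁻¹ := by
  set B := Matrix.diagonal (fun k => (θ (I k))⁻¹) * V.submatrix I id with hBdef
  set G := Pimᵀ * Matrix.diagonal (fun i => θ i ^ 2) * Pim with hGdef
  have hBd : IsUnit B.det := (Matrix.isUnit_iff_isUnit_det B).mp hB
  have hBTd : IsUnit Bᵀ.det := by rw [Matrix.det_transpose]; exact hBd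
  have hdiag2 : Matrix.diagonal θ * Matrix.diagonal θ
      = Matrix.diagonal (fun i => θ i ^ 2) := by
    rw [Matrix.diagonal_mul_diagonal]
    congr 1; funext i; ring
  have key : Bᵀ * G * B = 1 := by
    have h := hVorth
    rw [hVdef] at h
    calc Bᵀ * G * B
        = (Matrix.diagonal θ * Pim * B)ᵀ * (Matrix.diagonal θ * Pim * B) := by
          simp only [Matrix.transpose_mul, Matrix.diagonal_transpose, hGdef,
            ← hdiag2, Matrix.mul_assoc]
      _ = 1 := h
  have hGeq : G = (Bᵀ)⁻¹ * B⁻¹ := by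
    calc G = (Bᵀ)⁻¹ * Bᵀ * G * (B * B⁻¹) := by
            rw [Matrix.nonsing_inv_mul _ hBTd, Matrix.mul_nonsing_inv _ hBd,
              Matrix.one_mul, Matrix.mul_one]
      _ = (Bᵀ)⁻¹ * (Bᵀ * G * B) * B⁻¹ := by simp only [Matrix.mul_assoc]
      _ = (Bᵀ)⁻¹ * B⁻¹ := by rw [key, Matrix.mul_one]
  have hGB : G * (B * Bᵀ) = 1 := by
    rw [hGeq, Matrix.mul_assoc, Matrix.nonsing_inv_mul_cancel_left _ _ hBd,
      Matrix.nonsing_inv_mul _ hBTd]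
  have hGinv : Invertible G := invertibleOfRightInverse _ _ hGB
  exact ⟨isUnit_of_invertible G, (Matrix.inv_eq_right_inv hGB).symm⟩
end

section
/- Suppose V = Θ̃ Π Θ̃(I,I)^{-1} V(I,:) with V'V = I_K, where Π is a rank-K membership matrix with pure-node index tuple I (Π(I,:) = I_K), Θ̃ is diagonal with diagonal entries in [θ̃_min, θ̃_max], θ̃_min > 0, every row of V is nonzero, and V(I,:) is invertible. Let κ(Π'Π) = λ₁(Π'Π)/λ_K(Π'Π) be the condition number of Π'Π. Then the largest eigenvalue of V_{*,1}(I,:) V_{*,1}(I,:)' is at most (θ̃_max²/θ̃_min²) · K · κ(Π'Π), and its smallest eigenvalue is at least (θ̃_min²/θ̃_max²) · κ(Π'Π)^{-1}. -/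
open Matrix

namespace CGEB
variable {K : ℕ}

lemma dot_self_nonneg' (z : Fin K → ℝ) : 0 ≤ z ⬝ᵥ z :=
  Finset.sum_nonneg fun _ _ => mul_self_nonneg _

lemma dot_cs (x y : Fin K → ℝ) : (x ⬝ᵥ y) ^ 2 ≤ (x ⬝ᵥ x) * (y ⬝ᵥ y) := by
  have := Finset.sum_mul_sq_le_sq_mul_sq Finset.univ x y
  simpa [dotProduct, pow_two] using this

lemma cs_psd (A : Matrix (Fin K) (Fin K) ℝ) (hsymm : Aᵀ = A)
    (hpsd : ∀ z : Fin K → ℝ, 0 ≤ z ⬝ᵥ A *ᵥ z) (x y : Fin K → ℝ) :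
    (x ⬝ᵥ A *ᵥ y) ^ 2 ≤ (x ⬝ᵥ A *ᵥ x) * (y ⬝ᵥ A *ᵥ y) := by
  have hxy : y ⬝ᵥ A *ᵥ x = x ⬝ᵥ A *ᵥ y := by
    rw [dotProduct_mulVec y A x, ← mulVec_transpose, hsymm, dotProduct_comm]
  have h : ∀ t : ℝ, 0 ≤ (y ⬝ᵥ A *ᵥ y) * (t * t) + (2 * (x ⬝ᵥ A *ᵥ y)) * t + (x ⬝ᵥ A *ᵥ x) := by
    intro t
    have := hpsd (x + t • y)
    simp only [mulVec_add, mulVec_smul, dotProduct_add, add_dotProduct,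
      dotProduct_smul, smul_dotProduct, smul_eq_mul] at this
    rw [hxy] at this
    nlinarith [this]
  have hd := discrim_le_zero h
  rw [discrim] at hd
  nlinarith [hd]

lemma inv_qf_bounds (P Q : Matrix (Fin K) (Fin K) ℝ) (hPsymm : Pᵀ = P)
    (hPQ : P * Q = 1) {μ ν : ℝ} (hμ : 0 < μ) (hν : 0 < ν)
    (hlow : ∀ x, μ * (x ⬝ᵥ x) ≤ x ⬝ᵥ P *ᵥ x)
    (hup : ∀ x, x ⬝ᵥ P *ᵥ x ≤ ν * (x ⬝ᵥ x)) (x : Fin K → ℝ) :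
    (x ⬝ᵥ x) / ν ≤ x ⬝ᵥ Q *ᵥ x ∧ x ⬝ᵥ Q *ᵥ x ≤ (x ⬝ᵥ x) / μ := by
  set y := Q *ᵥ x with hy
  have hPy : P *ᵥ y = x := by rw [hy, Matrix.mulVec_mulVec, hPQ, one_mulVec]
  set s := x ⬝ᵥ Q *ᵥ x with hs
  have hsxy : s = x ⬝ᵥ y := rfl
  have hyx : y ⬝ᵥ x = s := by rw [hsxy, dotProduct_comm]
  have hyPy : y ⬝ᵥ P *ᵥ y = s := by rw [hPy, hyx]
  have hsnn : 0 ≤ s := le_trans (mul_nonneg hμ.le (dot_self_nonneg' y)) ((hlow y).trans hyPy.le)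
  have hcs : s ^ 2 ≤ (x ⬝ᵥ x) * (y ⬝ᵥ y) := by rw [hsxy]; exact dot_cs x y
  have hμy : μ * (y ⬝ᵥ y) ≤ s := (hlow y).trans hyPy.le
  constructor
  · have hcs2 := cs_psd P hPsymm
      (fun z => le_trans (mul_nonneg hμ.le (dot_self_nonneg' z)) (hlow z)) x y
    rw [hPy, hyx] at hcs2
    rw [div_le_iff₀ hν]
    have h3 : (x ⬝ᵥ x) ^ 2 ≤ ν * (x ⬝ᵥ x) * s :=
      hcs2.trans (by nlinarith [mul_le_mul_of_nonneg_right (hup x) hsnn])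
    rcases eq_or_lt_of_le (dot_self_nonneg' x) with h0 | h0
    · rw [← h0]; exact mul_nonneg hsnn hν.le
    · nlinarith [h3, h0]
  · rcases eq_or_lt_of_le hsnn with h0 | h0
    · rw [← h0]
      exact div_nonneg (dot_self_nonneg' x) hμ.le
    · rw [le_div_iff₀ hμ]
      nlinarith [hcs, hμy, dot_self_nonneg' x, dot_self_nonneg' y]

lemma qf_eq (A : Matrix (Fin K) (Fin K) ℝ) (hA : A.IsHermitian)
    (x : Fin K → ℝ) :
    x ⬝ᵥ A *ᵥ x = ∑ i, hA.eigenvalues i *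
        ((star (hA.eigenvectorUnitary : Matrix (Fin K) (Fin K) ℝ) *ᵥ x) i) ^ 2 ∧
      x ⬝ᵥ x = ∑ i,
        ((star (hA.eigenvectorUnitary : Matrix (Fin K) (Fin K) ℝ) *ᵥ x) i) ^ 2 := by
  set U := (hA.eigenvectorUnitary : Matrix (Fin K) (Fin K) ℝ) with hU
  have hstar : star U = Uᵀ := by
    rw [Matrix.star_eq_conjTranspose, Matrix.conjTranspose_eq_transpose_of_trivial]
  have hUU : U * Uᵀ = 1 := by
    have := Matrix.mem_unitaryGroup_iff.mp (hA.eigenvectorUnitary).2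
    rwa [hstar] at this
  set y := star U *ᵥ x with hy
  have hyt : y = Uᵀ *ᵥ x := by rw [hy, hstar]
  have hdot : ∀ w : Fin K → ℝ, x ⬝ᵥ U *ᵥ w = y ⬝ᵥ w := by
    intro w
    rw [dotProduct_mulVec, hyt, mulVec_transpose]
  have hDiag : (Matrix.diagonal (RCLike.ofReal ∘ hA.eigenvalues) : Matrix (Fin K) (Fin K) ℝ)
      = Matrix.diagonal hA.eigenvalues := rfl
  constructor
  · conv_lhs => rw [hA.spectral_theorem, Unitary.conjStarAlgAut_apply]
    rw [hDiag, hstar, ← Matrix.mulVec_mulVec, ← Matrix.mulVec_mulVec, hdot, ← hyt]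
    simp only [mulVec_diagonal, dotProduct]
    exact Finset.sum_congr rfl fun i _ => by ring
  · have : x ⬝ᵥ x = x ⬝ᵥ (U * Uᵀ) *ᵥ x := by rw [hUU, one_mulVec]
    rw [this, ← Matrix.mulVec_mulVec, hdot, ← hyt]
    simp only [dotProduct]
    exact Finset.sum_congr rfl fun i _ => by ring

lemma rayleigh (A : Matrix (Fin K) (Fin K) ℝ) (hA : A.IsHermitian)
    (x : Fin K → ℝ) :
    (⨅ i, hA.eigenvalues i) * (x ⬝ᵥ x) ≤ x ⬝ᵥ A *ᵥ x ∧
      x ⬝ᵥ A *ᵥ x ≤ (⨆ i, hA.eigenvalues i) * (x ⬝ᵥ x) := by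
  obtain ⟨h1, h2⟩ := qf_eq A hA x
  rw [h1, h2, Finset.mul_sum, Finset.mul_sum]
  constructor
  · refine Finset.sum_le_sum fun i _ => ?_
    exact mul_le_mul_of_nonneg_right (ciInf_le (Finite.bddBelow_range _) i) (sq_nonneg _)
  · refine Finset.sum_le_sum fun i _ => ?_
    exact mul_le_mul_of_nonneg_right (le_ciSup (Finite.bddAbove_range _) i) (sq_nonneg _)

end CGEB

open CGEB

set_option maxHeartbeats 1600000 in
/-- **eigenvalue bounds for the corner Gram matrix.** Under the ideal setup,
with `κ(Π'Π) = λ₁(Π'Π)/λ_K(Π'Π)`, the largest eigenvalue of `V₊(I,:) V₊(I,:)'` is at most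
`(θmax²/θmin²)·K·κ(Π'Π)` and its smallest eigenvalue is at least `(θmin²/θmax²)·κ(Π'Π)⁻¹`. -/
theorem corner_gram_eigenvalue_bounds {n K : ℕ} (hK : 1 ≤ K) (hKn : K ≤ n)
    (Pim : Matrix (Fin n) (Fin K) ℝ)
    (hnonneg : ∀ i k, 0 ≤ Pim i k)
    (hrowsum : ∀ i, ∑ k, Pim i k = 1)
    (hrank : Pim.rank = K)
    (I : Fin K → Fin n)
    (hpure : ∀ k l, Pim (I k) l = if l = k then (1 : ℝ) else 0)
    (θ : Fin n → ℝ) (θmin θmax : ℝ) (hθmin : 0 < θmin)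
    (hθ : ∀ i, θmin ≤ θ i ∧ θ i ≤ θmax)
    (V : Matrix (Fin n) (Fin K) ℝ)
    (hVorth : Vᵀ * V = 1)
    (hVdef : V = Matrix.diagonal θ * Pim *
      (Matrix.diagonal (fun k => (θ (I k))⁻¹) * V.submatrix I id))
    (hrows : ∀ i, V i ≠ 0)
    (hVI : IsUnit (V.submatrix I id))
    (hH : (Pimᵀ * Pim).IsHermitian)
    (hHc : (((rowNormalize V).submatrix I id) *
      ((rowNormalize V).submatrix I id)ᵀ).IsHermitian) :
    (⨆ k, hHc.eigenvalues k) ≤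
      θmax ^ 2 / θmin ^ 2 * K *
        ((⨆ k, hH.eigenvalues k) / (⨅ k, hH.eigenvalues k)) ∧
    θmin ^ 2 / θmax ^ 2 *
        ((⨆ k, hH.eigenvalues k) / (⨅ k, hH.eigenvalues k))⁻¹ ≤
      ⨅ k, hHc.eigenvalues k := by
  classical
  haveI : NeZero K := ⟨Nat.one_le_iff_ne_zero.mp hK⟩
  have hθpos : ∀ i, 0 < θ i := fun i => lt_of_lt_of_le hθmin (hθ i).1
  have hθmaxpos : 0 < θmax := lt_of_lt_of_le (hθpos (I ⟨0, hK⟩)) (hθ _).2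
  set B := V.submatrix I id with hBdef
  set d : Fin K → ℝ := fun k => rnorm (V (I k)) with hddef
  have hdpos : ∀ k, 0 < d k := by
    intro k
    have hne := hrows (I k)
    simp only [hddef, rnorm]
    apply Real.sqrt_pos.mpr
    obtain ⟨j, hj⟩ := Function.ne_iff.mp hne
    refine Finset.sum_pos' (fun j _ => sq_nonneg _) ⟨j, Finset.mem_univ j, ?_⟩
    simpa using sq_pos_of_ne_zero hj
  have hdsq : ∀ k, d k ^ 2 = ∑ j, V (I k) j ^ 2 := by
    intro k
    simp only [hddef, rnorm]
    exact Real.sq_sqrt (Finset.sum_nonneg fun j _ => sq_nonneg _)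
  set infH := ⨅ k, hH.eigenvalues k with hinfdef
  set supH := ⨆ k, hH.eigenvalues k with hsupdef
  have hqfPim : ∀ x : Fin K → ℝ, x ⬝ᵥ (Pimᵀ * Pim) *ᵥ x = (Pim *ᵥ x) ⬝ᵥ (Pim *ᵥ x) := by
    intro x
    rw [← Matrix.mulVec_mulVec, dotProduct_mulVec, vecMul_transpose]
  have hinj : ∀ x : Fin K → ℝ, x ≠ 0 → Pim *ᵥ x ≠ 0 := by
    intro x hx
    have hker : LinearMap.ker Pim.mulVecLin = ⊥ := by
      have h1 := LinearMap.finrank_range_add_finrank_ker Pim.mulVecLin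
      simp only [Module.finrank_pi, Fintype.card_fin] at h1
      have h2 : Module.finrank ℝ (LinearMap.range Pim.mulVecLin) = K := hrank
      have h3 : Module.finrank ℝ (LinearMap.ker Pim.mulVecLin) = 0 := by omega
      exact Submodule.finrank_eq_zero.mp h3
    intro hcon
    exact hx (LinearMap.ker_eq_bot.mp hker (show Pim.mulVecLin x = Pim.mulVecLin 0 by
      simpa [Matrix.mulVecLin_apply] using hcon))
  have hPD : (Pimᵀ * Pim).PosDef := by
    refine Matrix.PosDef.of_dotProduct_mulVec_pos hH fun x hx => ?_
    rw [star_trivial, hqfPim]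
    have h1 : Pim *ᵥ x ≠ 0 := hinj x hx
    have h2 : (Pim *ᵥ x) ⬝ᵥ (Pim *ᵥ x) ≠ 0 := fun hc => h1 (dotProduct_self_eq_zero.mp hc)
    exact lt_of_le_of_ne (dot_self_nonneg' _) (Ne.symm h2)
  have hevpos : ∀ k, 0 < hH.eigenvalues k := fun k => hPD.eigenvalues_pos k
  have hinfpos : 0 < infH := by
    obtain ⟨i, hi⟩ := Finite.exists_min hH.eigenvalues
    exact lt_of_lt_of_le (hevpos i) (le_ciInf hi)
  have hinfsup : infH ≤ supH :=
    le_trans (ciInf_le (Finite.bddBelow_range _) (⟨0, hK⟩ : Fin K))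
      (le_ciSup (Finite.bddAbove_range _) (⟨0, hK⟩ : Fin K))
  have hsuppos : 0 < supH := lt_of_lt_of_le hinfpos hinfsup
  set E : Matrix (Fin K) (Fin K) ℝ := Matrix.diagonal (fun k => (θ (I k))⁻¹) with hEdef
  set T : Matrix (Fin K) (Fin K) ℝ := Matrix.diagonal (fun k => θ (I k)) with hTdef
  set P : Matrix (Fin K) (Fin K) ℝ := Pimᵀ * Matrix.diagonal (θ * θ) * Pim with hPdef
  have hTE : T * E = 1 := by
    rw [hTdef, hEdef, Matrix.diagonal_mul_diagonal]
    have he : (fun k => θ (I k) * (θ (I k))⁻¹) = fun _ : Fin K => (1:ℝ) :=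
      funext fun k => mul_inv_cancel₀ (hθpos (I k)).ne'
    rw [he, Matrix.diagonal_one]
  have hEsymm : Eᵀ = E := by rw [hEdef, Matrix.diagonal_transpose]
  set μ := θmin ^ 2 * infH with hμdef
  set ν := θmax ^ 2 * supH with hνdef
  have hμpos : 0 < μ := mul_pos (pow_pos hθmin 2) hinfpos
  have hνpos : 0 < ν := mul_pos (pow_pos hθmaxpos 2) hsuppos
  have hqfP : ∀ x : Fin K → ℝ, x ⬝ᵥ P *ᵥ x = ∑ i, (θ i * θ i) * ((Pim *ᵥ x) i) ^ 2 := by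
    intro x
    rw [hPdef, ← Matrix.mulVec_mulVec, ← Matrix.mulVec_mulVec, dotProduct_mulVec,
      vecMul_transpose]
    simp only [mulVec_diagonal, dotProduct, Pi.mul_apply]
    exact Finset.sum_congr rfl fun i _ => by ring
  have hPlow : ∀ x : Fin K → ℝ, μ * (x ⬝ᵥ x) ≤ x ⬝ᵥ P *ᵥ x := by
    intro x
    rw [hqfP]
    have h1 : θmin ^ 2 * ((Pim *ᵥ x) ⬝ᵥ (Pim *ᵥ x)) ≤ ∑ i, (θ i * θ i) * ((Pim *ᵥ x) i) ^ 2 := by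
      rw [dotProduct, Finset.mul_sum]
      refine Finset.sum_le_sum fun i _ => ?_
      have h : θmin ^ 2 ≤ θ i * θ i := by nlinarith [(hθ i).1, hθmin]
      nlinarith [sq_nonneg ((Pim *ᵥ x) i), h]
    have h2 := (rayleigh (Pimᵀ * Pim) hH x).1
    rw [hqfPim] at h2
    rw [← hinfdef] at h2
    calc μ * (x ⬝ᵥ x) = θmin ^ 2 * (infH * (x ⬝ᵥ x)) := by rw [hμdef]; ring
    _ ≤ θmin ^ 2 * ((Pim *ᵥ x) ⬝ᵥ (Pim *ᵥ x)) := mul_le_mul_of_nonneg_left h2 (sq_nonneg _)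
    _ ≤ _ := h1
  have hPup : ∀ x : Fin K → ℝ, x ⬝ᵥ P *ᵥ x ≤ ν * (x ⬝ᵥ x) := by
    intro x
    rw [hqfP]
    have h1 : ∑ i, (θ i * θ i) * ((Pim *ᵥ x) i) ^ 2 ≤ θmax ^ 2 * ((Pim *ᵥ x) ⬝ᵥ (Pim *ᵥ x)) := by
      rw [dotProduct, Finset.mul_sum]
      refine Finset.sum_le_sum fun i _ => ?_
      have h : θ i * θ i ≤ θmax ^ 2 := by nlinarith [(hθ i).2, hθpos i]
      nlinarith [sq_nonneg ((Pim *ᵥ x) i), h]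
    have h2 := (rayleigh (Pimᵀ * Pim) hH x).2
    rw [hqfPim] at h2
    rw [← hsupdef] at h2
    calc ∑ i, (θ i * θ i) * ((Pim *ᵥ x) i) ^ 2
        ≤ θmax ^ 2 * ((Pim *ᵥ x) ⬝ᵥ (Pim *ᵥ x)) := h1
    _ ≤ θmax ^ 2 * (supH * (x ⬝ᵥ x)) := mul_le_mul_of_nonneg_left h2 (sq_nonneg _)
    _ = ν * (x ⬝ᵥ x) := by rw [hνdef]; ring
  have hGram : Bᵀ * (E * P * E) * B = 1 := by
    rw [hVdef] at hVorth
    simp only [hPdef, Matrix.transpose_mul, Matrix.diagonal_transpose, hEsymm,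
      Matrix.mul_assoc] at hVorth ⊢
    rw [← Matrix.mul_assoc (Matrix.diagonal θ) (Matrix.diagonal θ),
      Matrix.diagonal_mul_diagonal] at hVorth
    exact hVorth
  have hBdet : IsUnit B.det := (Matrix.isUnit_iff_isUnit_det _).mp hVI
  have hBinv : B * B⁻¹ = 1 := Matrix.mul_nonsing_inv _ hBdet
  have hRight : B * Bᵀ * (E * P * E) = 1 := by
    have h1 : B * Bᵀ * (E * P * E) * (B * B⁻¹) = B * (Bᵀ * (E * P * E) * B) * B⁻¹ := by
      simp only [Matrix.mul_assoc]
    rw [hBinv, Matrix.mul_one] at h1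
    rw [h1, hGram, Matrix.mul_one, hBinv]
  have hLeft : (E * P * E) * (B * Bᵀ) = 1 := mul_eq_one_comm.mp hRight
  set Q : Matrix (Fin K) (Fin K) ℝ := E * (B * Bᵀ) * E with hQdef
  have h4 : T * ((E * P * E) * (B * Bᵀ)) * E = P * Q := by
    rw [hQdef]
    simp only [← Matrix.mul_assoc]
    rw [hTE, Matrix.one_mul]
  have hPQ : P * Q = 1 := by
    rw [← h4, hLeft, Matrix.mul_one, hTE]
  have hPsymm : Pᵀ = P := by
    rw [hPdef]
    simp only [Matrix.transpose_mul, Matrix.transpose_transpose, Matrix.diagonal_transpose,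
      Matrix.mul_assoc]
  have hBBt : ∀ k, (B * Bᵀ) k k = d k ^ 2 := by
    intro k
    rw [Matrix.mul_apply, hdsq]
    refine Finset.sum_congr rfl fun j _ => ?_
    rw [Matrix.transpose_apply, hBdef]
    simp [Matrix.submatrix_apply]
    ring
  have hQentry : ∀ k, Q k k = (θ (I k))⁻¹ * d k ^ 2 * (θ (I k))⁻¹ := by
    intro k
    rw [hQdef, hEdef, Matrix.mul_diagonal, Matrix.diagonal_mul, hBBt k]
  have hQb := inv_qf_bounds P Q hPsymm hPQ hμpos hνpos hPlow hPup
  have hQkk : ∀ k, 1 / ν ≤ Q k k ∧ Q k k ≤ 1 / μ := by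
    intro k
    have h5 : (Pi.single k 1 : Fin K → ℝ) ⬝ᵥ (Pi.single k 1 : Fin K → ℝ) = 1 := by
      simp [dotProduct, Pi.single_apply]
    have h6 : (Pi.single k 1 : Fin K → ℝ) ⬝ᵥ Q *ᵥ (Pi.single k 1 : Fin K → ℝ) = Q k k := by
      simp [dotProduct, Matrix.mulVec, Pi.single_apply]
    have := hQb (Pi.single k 1)
    rw [h5, h6] at this
    exact this
  set f : Fin K → ℝ := fun k => (d k)⁻¹ * θ (I k) with hfdef
  have hfQ : ∀ k, f k ^ 2 * Q k k = 1 := by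
    intro k
    rw [hQentry, hfdef]
    field_simp [(hdpos k).ne', (hθpos (I k)).ne']
  have hQkkpos : ∀ k, 0 < Q k k := by
    intro k
    rw [hQentry]
    have := hdpos k
    have := hθpos (I k)
    positivity
  have hfb : ∀ k, μ ≤ f k ^ 2 ∧ f k ^ 2 ≤ ν := by
    intro k
    have hm1 : μ * Q k k ≤ 1 := by
      have h := mul_le_mul_of_nonneg_left (hQkk k).2 hμpos.le
      rwa [mul_one_div, div_self hμpos.ne'] at h
    have hm2 : 1 ≤ ν * Q k k := by
      have h := mul_le_mul_of_nonneg_left (hQkk k).1 hνpos.le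
      rwa [mul_one_div, div_self hνpos.ne'] at h
    constructor
    · nlinarith [hfQ k, hm1, hQkkpos k]
    · nlinarith [hfQ k, hm2, hQkkpos k]
  set N := (rowNormalize V).submatrix I id with hNdef
  have hNfact : N = Matrix.diagonal (fun k => (d k)⁻¹) * B := by
    ext k j
    rw [hNdef, Matrix.submatrix_apply, Matrix.diagonal_mul, hBdef, Matrix.submatrix_apply]
    simp only [rowNormalize, Matrix.of_apply, id_eq, hddef]
    rw [div_eq_inv_mul]
  set Gc := N * Nᵀ with hGcdef
  set Fm := Matrix.diagonal f with hFmdef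
  have h5 : Fm * E = Matrix.diagonal (fun k => (d k)⁻¹) := by
    rw [hFmdef, hEdef, Matrix.diagonal_mul_diagonal]
    refine congrArg Matrix.diagonal (funext fun k => ?_)
    simp only [hfdef, Pi.mul_apply]
    rw [mul_assoc, mul_inv_cancel₀ (hθpos (I k)).ne', mul_one]
  have h6 : E * Fm = Matrix.diagonal (fun k => (d k)⁻¹) := by
    rw [hFmdef, hEdef, Matrix.diagonal_mul_diagonal]
    refine congrArg Matrix.diagonal (funext fun k => ?_)
    simp only [hfdef, Pi.mul_apply]
    rw [mul_comm ((d k)⁻¹) (θ (I k)), ← mul_assoc, inv_mul_cancel₀ (hθpos (I k)).ne', one_mul]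
  have hGcQ : Gc = Fm * Q * Fm := by
    rw [hGcdef, hNfact]
    calc (Matrix.diagonal (fun k => (d k)⁻¹) * B) * (Matrix.diagonal (fun k => (d k)⁻¹) * B)ᵀ
        = Matrix.diagonal (fun k => (d k)⁻¹) * (B * Bᵀ) * Matrix.diagonal (fun k => (d k)⁻¹) := by
          simp only [Matrix.transpose_mul, Matrix.diagonal_transpose, Matrix.mul_assoc]
    _ = Fm * Q * Fm := by
          rw [hQdef]
          have hx : Fm * (E * (B * Bᵀ) * E) * Fm = (Fm * E) * (B * Bᵀ) * (E * Fm) := by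
            simp only [Matrix.mul_assoc]
          rw [hx, h5, h6]
  have hqfGc : ∀ x : Fin K → ℝ,
      x ⬝ᵥ Gc *ᵥ x = (fun k => f k * x k) ⬝ᵥ Q *ᵥ (fun k => f k * x k) := by
    intro x
    rw [hGcQ, ← Matrix.mulVec_mulVec, ← Matrix.mulVec_mulVec, dotProduct_mulVec x Fm]
    have hv : x ᵥ* Fm = fun k => f k * x k := by
      funext k
      rw [hFmdef, Matrix.vecMul_diagonal]
      ring
    have hv2 : Fm *ᵥ x = fun k => f k * x k := by
      funext k
      rw [hFmdef, Matrix.mulVec_diagonal]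
    rw [hv, hv2]
  have hzz : ∀ x : Fin K → ℝ,
      μ * (x ⬝ᵥ x) ≤ (fun k => f k * x k) ⬝ᵥ (fun k => f k * x k) ∧
      (fun k => f k * x k) ⬝ᵥ (fun k => f k * x k) ≤ ν * (x ⬝ᵥ x) := by
    intro x
    constructor
    · rw [dotProduct, dotProduct, Finset.mul_sum]
      refine Finset.sum_le_sum fun k _ => ?_
      nlinarith [(hfb k).1, sq_nonneg (x k), mul_self_nonneg (x k)]
    · rw [dotProduct, dotProduct, Finset.mul_sum]
      refine Finset.sum_le_sum fun k _ => ?_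
      nlinarith [(hfb k).2, sq_nonneg (x k), mul_self_nonneg (x k)]
  have hGclow : ∀ x : Fin K → ℝ, μ / ν * (x ⬝ᵥ x) ≤ x ⬝ᵥ Gc *ᵥ x := by
    intro x
    rw [hqfGc]
    have h7 := (hQb (fun k => f k * x k)).1
    refine le_trans ?_ h7
    rw [div_mul_eq_mul_div]
    exact div_le_div_of_nonneg_right ((hzz x).1) hνpos.le |>.trans_eq rfl
  have hGcup : ∀ x : Fin K → ℝ, x ⬝ᵥ Gc *ᵥ x ≤ ν / μ * (x ⬝ᵥ x) := by
    intro x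
    rw [hqfGc]
    have h7 := (hQb (fun k => f k * x k)).2
    refine le_trans h7 ?_
    rw [div_mul_eq_mul_div]
    exact div_le_div_of_nonneg_right ((hzz x).2) hμpos.le |>.trans_eq rfl
  have heig : ∀ k, μ / ν ≤ hHc.eigenvalues k ∧ hHc.eigenvalues k ≤ ν / μ := by
    intro k
    set v : Fin K → ℝ := ⇑(hHc.eigenvectorBasis k) with hv
    have hv1 : v ⬝ᵥ v = 1 := by
      have hn : ‖hHc.eigenvectorBasis k‖ = 1 := hHc.eigenvectorBasis.orthonormal.1 k
      have h8 : v ⬝ᵥ v = ‖hHc.eigenvectorBasis k‖ ^ 2 := by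
        rw [← real_inner_self_eq_norm_sq]
        simp only [PiLp.inner_apply, dotProduct, RCLike.inner_apply, hv]
        simp
      rw [h8, hn, one_pow]
    have hlam : hHc.eigenvalues k = v ⬝ᵥ Gc *ᵥ v := by
      have h9 := hHc.eigenvalues_eq k
      simpa [hv] using h9
    constructor
    · have := hGclow v
      rw [hv1, mul_one] at this
      rw [hlam]
      exact this
    · have := hGcup v
      rw [hv1, mul_one] at this
      rw [hlam]
      exact this
  constructor
  · refine le_trans (ciSup_le fun k => (heig k).2) ?_
    have hK1 : (1 : ℝ) ≤ K := by exact_mod_cast hK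
    have hq : ν / μ = θmax ^ 2 / θmin ^ 2 * (supH / infH) := by
      rw [hμdef, hνdef]
      field_simp
    rw [hq]
    have hnn1 : 0 ≤ θmax ^ 2 / θmin ^ 2 := by positivity
    have hnn2 : 0 ≤ supH / infH := by positivity
    nlinarith [hnn1, hnn2, hK1, mul_nonneg hnn1 hnn2]
  · refine le_trans ?_ (le_ciInf fun k => (heig k).1)
    have hq : θmin ^ 2 / θmax ^ 2 * (supH / infH)⁻¹ = μ / ν := by
      rw [hμdef, hνdef]
      field_simp
    exact le_of_eq hq
end

section
/- Let ℒ = Θ̃ Π P Π' Θ̃ where Π ∈ ℝ^{n×K} has rank K, P ∈ ℝ^{K×K} is symmetric and invertible, and Θ̃ is diagonal with diagonal entries ≥ θ̃_min > 0. Then ℒ is a symmetric matrix of rank K, and its K-th largest singular value (equivalently, the smallest absolute value among its K nonzero eigenvalues) satisfies σ_K(ℒ) ≥ θ̃_min² · σ_min(P) · λ_K(Π'Π), where σ_min(P) is the smallest singular value of P and λ_K(Π'Π) is the smallest eigenvalue of the positive definite matrix Π'Π. -/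
set_option maxHeartbeats 1000000
open Matrix

private lemma dot_mulVec_transpose {m k : ℕ} (A : Matrix (Fin m) (Fin k) ℝ)
    (x : Fin k → ℝ) (u : Fin m → ℝ) : x ⬝ᵥ (Aᵀ *ᵥ u) = (A *ᵥ x) ⬝ᵥ u := by
  rw [dotProduct_mulVec, vecMul_transpose]

private lemma herm_decomp {k : ℕ} (M : Matrix (Fin k) (Fin k) ℝ) (hM : M.IsHermitian)
    (x : Fin k → ℝ) :
    ∃ y : Fin k → ℝ,
      x ⬝ᵥ x = ∑ j, y j ^ 2 ∧
      x ⬝ᵥ (M *ᵥ x) = ∑ j, hM.eigenvalues j * y j ^ 2 ∧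
      (M *ᵥ x) ⬝ᵥ (M *ᵥ x) = ∑ j, (hM.eigenvalues j * y j) ^ 2 := by
  set U : Matrix (Fin k) (Fin k) ℝ := (hM.eigenvectorUnitary : Matrix (Fin k) (Fin k) ℝ) with hU
  have hU1 : star U * U = 1 := mem_unitaryGroup_iff'.mp hM.eigenvectorUnitary.2
  have hU2 : U * star U = 1 := mem_unitaryGroup_iff.mp hM.eigenvectorUnitary.2
  have hUt : Uᵀ * U = 1 := by
    rw [← conjTranspose_eq_transpose_of_trivial, ← star_eq_conjTranspose, hU1]
  set y : Fin k → ℝ := star U *ᵥ x with hy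
  have hx : U *ᵥ y = x := by rw [hy, mulVec_mulVec, hU2, one_mulVec]
  have hpres : ∀ a b : Fin k → ℝ, (U *ᵥ a) ⬝ᵥ (U *ᵥ b) = a ⬝ᵥ b := by
    intro a b
    rw [dotProduct_mulVec, ← vecMul_transpose, vecMul_vecMul, hUt, vecMul_one]
  have hdiag : diagonal (RCLike.ofReal ∘ hM.eigenvalues) = diagonal hM.eigenvalues := rfl
  have hMx : M *ᵥ x = U *ᵥ ((diagonal hM.eigenvalues) *ᵥ y) := by
    conv_lhs => rw [hM.spectral_theorem]
    rw [hdiag, Unitary.conjStarAlgAut_apply, ← mulVec_mulVec, ← mulVec_mulVec, hy]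
  refine ⟨y, ?_, ?_, ?_⟩
  · rw [← hx, hpres, dotProduct]
    exact Finset.sum_congr rfl fun j _ => (sq (y j)).symm
  · rw [hMx]
    conv_lhs => rw [← hx]
    rw [hpres, dotProduct]
    exact Finset.sum_congr rfl fun j _ => by rw [mulVec_diagonal]; ring
  · rw [hMx, hpres, dotProduct]
    exact Finset.sum_congr rfl fun j _ => by rw [mulVec_diagonal]; ring

private lemma quad_lower {k : ℕ} (hk : 0 < k) (M : Matrix (Fin k) (Fin k) ℝ)
    (hM : M.IsHermitian) (x : Fin k → ℝ) :
    (⨅ j, hM.eigenvalues j) * (x ⬝ᵥ x) ≤ x ⬝ᵥ (M *ᵥ x) := by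
  have : Nonempty (Fin k) := ⟨⟨0, hk⟩⟩
  obtain ⟨y, h1, h2, _⟩ := herm_decomp M hM x
  rw [h1, h2, Finset.mul_sum]
  exact Finset.sum_le_sum fun j _ =>
    mul_le_mul_of_nonneg_right (ciInf_le (Finite.bddBelow_range _) j) (sq_nonneg _)

private lemma mulVec_sq_lower {k : ℕ} (hk : 0 < k) (M : Matrix (Fin k) (Fin k) ℝ)
    (hM : M.IsHermitian) (x : Fin k → ℝ) :
    (⨅ j, |hM.eigenvalues j|) ^ 2 * (x ⬝ᵥ x) ≤ (M *ᵥ x) ⬝ᵥ (M *ᵥ x) := by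
  have : Nonempty (Fin k) := ⟨⟨0, hk⟩⟩
  obtain ⟨y, h1, _, h3⟩ := herm_decomp M hM x
  rw [h1, h3, Finset.mul_sum]
  refine Finset.sum_le_sum fun j _ => ?_
  have h0 : 0 ≤ ⨅ j, |hM.eigenvalues j| := le_ciInf fun j => abs_nonneg _
  have hle : (⨅ j, |hM.eigenvalues j|) ^ 2 ≤ hM.eigenvalues j ^ 2 := by
    rw [← sq_abs (hM.eigenvalues j)]
    exact pow_le_pow_left₀ h0 (ciInf_le (Finite.bddBelow_range _) j) 2
  calc (⨅ j, |hM.eigenvalues j|) ^ 2 * y j ^ 2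
      ≤ hM.eigenvalues j ^ 2 * y j ^ 2 :=
        mul_le_mul_of_nonneg_right hle (sq_nonneg _)
    _ = (hM.eigenvalues j * y j) ^ 2 := by ring


/-- **lower bound for the smallest nonzero singular value of `ℒ`.**
For `ℒ = Θ̃ Π P Π' Θ̃` with `rank Π = K`, `P` symmetric invertible and `Θ̃` diagonal with
entries `≥ θmin > 0`, `ℒ` is symmetric of rank `K` and every nonzero eigenvalue `μ` of `ℒ`
satisfies `|μ| ≥ θmin² · σmin(P) · λ_K(Π'Π)`, where `σmin(P)` is the smallest singular value
of the symmetric matrix `P` (the smallest `|eigenvalue|`) and `λ_K(Π'Π)` the smallest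
eigenvalue of `Π'Π`. This expresses `σ_K(ℒ) ≥ θmin² σmin(P) λ_K(Π'Π)`. -/
theorem smallest_nonzero_singular_value_bound {n K : ℕ} (hK : 1 ≤ K) (hKn : K ≤ n)
    (Pim : Matrix (Fin n) (Fin K) ℝ)
    (hnonneg : ∀ i k, 0 ≤ Pim i k)
    (hrowsum : ∀ i, ∑ k, Pim i k = 1)
    (hrank : Pim.rank = K)
    (θ : Fin n → ℝ) (θmin : ℝ) (hθmin : 0 < θmin) (hθ : ∀ i, θmin ≤ θ i)
    (P : Matrix (Fin K) (Fin K) ℝ) (hPsymm : P.IsSymm) (hPunit : IsUnit P)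
    (hHP : P.IsHermitian)
    (hH : (Pimᵀ * Pim).IsHermitian)
    (hHL : (Matrix.diagonal θ * Pim * P * Pimᵀ * Matrix.diagonal θ).IsHermitian) :
    (Matrix.diagonal θ * Pim * P * Pimᵀ * Matrix.diagonal θ).IsSymm ∧
    (Matrix.diagonal θ * Pim * P * Pimᵀ * Matrix.diagonal θ).rank = K ∧
    ∀ i : Fin n, hHL.eigenvalues i ≠ 0 →
      θmin ^ 2 * (⨅ j, |hHP.eigenvalues j|) * (⨅ j, hH.eigenvalues j) ≤
        |hHL.eigenvalues i| := by
  have hk : 0 < K := hK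
  have hθne : ∀ i, θ i ≠ 0 := fun i => ne_of_gt (lt_of_lt_of_le hθmin (hθ i))
  set D : Matrix (Fin n) (Fin n) ℝ := Matrix.diagonal θ with hD
  set A : Matrix (Fin n) (Fin K) ℝ := D * Pim with hAdef
  have hAT : Aᵀ = Pimᵀ * D := by rw [hAdef, transpose_mul, hD, diagonal_transpose]
  have hL : D * Pim * P * Pimᵀ * D = A * P * Aᵀ := by
    rw [hAT, hAdef, Matrix.mul_assoc]
  have hDdet : IsUnit D.det := by
    rw [hD, det_diagonal]
    exact isUnit_iff_ne_zero.mpr (Finset.prod_ne_zero_iff.mpr fun i _ => hθne i)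
  have hrankA : A.rank = K := by
    rw [hAdef, rank_mul_eq_right_of_isUnit_det D Pim hDdet, hrank]
  have hPdet : IsUnit P.det := (isUnit_iff_isUnit_det P).mp hPunit
  -- injectivity of Pim, hence of A
  have hker : LinearMap.ker Pim.mulVecLin = ⊥ := by
    have h1 := LinearMap.finrank_range_add_finrank_ker Pim.mulVecLin
    unfold Matrix.rank at hrank
    rw [hrank, Module.finrank_pi, Fintype.card_fin] at h1
    have h0 : Module.finrank ℝ (LinearMap.ker Pim.mulVecLin) = 0 := by omega
    exact Submodule.finrank_eq_zero.mp h0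
  have hPimzero : ∀ x : Fin K → ℝ, Pim *ᵥ x = 0 → x = 0 := by
    intro x hx
    refine LinearMap.ker_eq_bot.mp hker (a₁ := x) (a₂ := 0) ?_
    simp only [mulVecLin_apply, map_zero, hx]
  have hAzero : ∀ x : Fin K → ℝ, A *ᵥ x = 0 → x = 0 := by
    intro x hx
    rw [hAdef, ← mulVec_mulVec] at hx
    apply hPimzero
    funext i
    have h2 := congrFun hx i
    rw [hD, mulVec_diagonal] at h2
    exact (mul_eq_zero.mp h2).resolve_left (hθne i)
  have hGdet : IsUnit (Aᵀ * A).det := by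
    rw [isUnit_iff_ne_zero]
    intro h
    obtain ⟨x, hx0, hx⟩ := (Matrix.exists_mulVec_eq_zero_iff).mpr h
    apply hx0
    apply hAzero
    have h2 : x ⬝ᵥ ((Aᵀ * A) *ᵥ x) = (A *ᵥ x) ⬝ᵥ (A *ᵥ x) := by
      rw [← mulVec_mulVec, dot_mulVec_transpose]
    rw [hx, dotProduct_zero] at h2
    exact dotProduct_self_eq_zero.mp h2.symm
  refine ⟨?_, ?_, ?_⟩
  · rw [Matrix.IsSymm, ← conjTranspose_eq_transpose_of_trivial]
    exact hHL
  · refine le_antisymm ?_ ?_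
    · calc (D * Pim * P * Pimᵀ * D).rank
          ≤ (D * Pim * P * Pimᵀ).rank := rank_mul_le_left _ _
        _ ≤ (D * Pim * P).rank := rank_mul_le_left _ _
        _ ≤ (D * Pim).rank := rank_mul_le_left _ _
        _ = K := hrankA
    · have hform : Aᵀ * (D * Pim * P * Pimᵀ * D) * A = (Aᵀ * A) * (P * (Aᵀ * A)) := by
        rw [hL]
        simp only [Matrix.mul_assoc]
      have h1 : (Aᵀ * (D * Pim * P * Pimᵀ * D) * A).rank = K := by
        rw [hform, rank_mul_eq_right_of_isUnit_det _ _ hGdet,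
          rank_mul_eq_right_of_isUnit_det _ _ hPdet, rank_transpose_mul_self, hrankA]
      calc K = (Aᵀ * (D * Pim * P * Pimᵀ * D) * A).rank := h1.symm
        _ ≤ (Aᵀ * (D * Pim * P * Pimᵀ * D)).rank := rank_mul_le_left _ _
        _ ≤ (D * Pim * P * Pimᵀ * D).rank := rank_mul_le_right _ _
  ·
    intro i hi
    have hnK : Nonempty (Fin K) := ⟨⟨0, hk⟩⟩
    set μ := hHL.eigenvalues i with hμ
    set v : Fin n → ℝ := ⇑(hHL.eigenvectorBasis i) with hv
    have hvL : (D * Pim * P * Pimᵀ * D) *ᵥ v = μ • v := hHL.mulVec_eigenvectorBasis i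
    have hvne : v ≠ 0 := by
      intro h
      apply hHL.eigenvectorBasis.orthonormal.ne_zero i
      ext j
      exact congrFun h j
    set w : Fin K → ℝ := μ⁻¹ • (P *ᵥ (Aᵀ *ᵥ v)) with hw
    have hAPA : A *ᵥ (P *ᵥ (Aᵀ *ᵥ v)) = μ • v := by
      rw [mulVec_mulVec, mulVec_mulVec, ← hL]
      exact hvL
    have hAw : A *ᵥ w = v := by
      rw [hw, mulVec_smul, hAPA, smul_smul, inv_mul_cancel₀ hi, one_smul]
    have hwne : w ≠ 0 := by
      intro h
      apply hvne
      rw [← hAw, h, mulVec_zero]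
    set g : Fin K → ℝ := (Aᵀ * A) *ᵥ w with hg
    have hGw : g = Aᵀ *ᵥ v := by rw [hg, ← mulVec_mulVec, hAw]
    have hPg : P *ᵥ g = μ • w := by
      rw [hGw, hw, smul_smul, mul_inv_cancel₀ hi, one_smul]
    set q := w ⬝ᵥ w with hqdef
    have hqnn : 0 ≤ q := by
      rw [hqdef, dotProduct]
      exact Finset.sum_nonneg fun j _ => mul_self_nonneg _
    have hqpos : 0 < q := lt_of_le_of_ne hqnn fun h => hwne (dotProduct_self_eq_zero.mp h.symm)
    set c1 := ⨅ j, |hHP.eigenvalues j| with hc1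
    set c2 := ⨅ j, hH.eigenvalues j with hc2
    have hc1nn : 0 ≤ c1 := le_ciInf fun j => abs_nonneg _
    have hc2nn : 0 ≤ c2 := by
      have hps : (Pimᵀ * Pim).PosSemidef := by
        rw [← conjTranspose_eq_transpose_of_trivial]
        exact posSemidef_conjTranspose_mul_self Pim
      exact le_ciInf fun j => hps.eigenvalues_nonneg j
    have hstep1 : θmin ^ 2 * (c2 * q) ≤ w ⬝ᵥ g := by
      have e1 : w ⬝ᵥ g = (A *ᵥ w) ⬝ᵥ (A *ᵥ w) := by
        rw [hg, ← mulVec_mulVec, dot_mulVec_transpose]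
      have e2 : A *ᵥ w = D *ᵥ (Pim *ᵥ w) := by rw [hAdef, ← mulVec_mulVec]
      have e3 : (Pim *ᵥ w) ⬝ᵥ (Pim *ᵥ w) = w ⬝ᵥ ((Pimᵀ * Pim) *ᵥ w) := by
        rw [← mulVec_mulVec, dot_mulVec_transpose]
      have e4 : θmin ^ 2 * ((Pim *ᵥ w) ⬝ᵥ (Pim *ᵥ w)) ≤ (A *ᵥ w) ⬝ᵥ (A *ᵥ w) := by
        rw [e2, dotProduct, dotProduct, Finset.mul_sum]
        refine Finset.sum_le_sum fun j _ => ?_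
        rw [hD, mulVec_diagonal]
        have hsq : θmin * θmin ≤ θ j * θ j :=
          mul_le_mul (hθ j) (hθ j) hθmin.le ((hθmin.trans_le (hθ j)).le)
        nlinarith [hsq, mul_self_nonneg ((Pim *ᵥ w) j)]
      have e5 : c2 * q ≤ w ⬝ᵥ ((Pimᵀ * Pim) *ᵥ w) := quad_lower hk _ hH w
      rw [e1]
      calc θmin ^ 2 * (c2 * q) ≤ θmin ^ 2 * (w ⬝ᵥ ((Pimᵀ * Pim) *ᵥ w)) :=
            mul_le_mul_of_nonneg_left e5 (by positivity)
        _ = θmin ^ 2 * ((Pim *ᵥ w) ⬝ᵥ (Pim *ᵥ w)) := by rw [e3]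
        _ ≤ _ := e4
    have hCS : (w ⬝ᵥ g) ^ 2 ≤ q * (g ⬝ᵥ g) := by
      have h := Finset.sum_mul_sq_le_sq_mul_sq Finset.univ w g
      simp only [pow_two] at h
      simpa [hqdef, dotProduct, pow_two] using h
    have hstep3 : c1 ^ 2 * (g ⬝ᵥ g) ≤ μ ^ 2 * q := by
      have h := mulVec_sq_lower hk P hHP g
      rw [hPg] at h
      calc c1 ^ 2 * (g ⬝ᵥ g) ≤ (μ • w) ⬝ᵥ (μ • w) := h
        _ = μ ^ 2 * q := by
            rw [hqdef, smul_dotProduct, dotProduct_smul, smul_eq_mul, smul_eq_mul]; ring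
    have hG2 : θmin ^ 2 * c2 * (θmin ^ 2 * c2) * q ≤ g ⬝ᵥ g := by
      refine le_of_mul_le_mul_left ?_ hqpos
      calc q * (θmin ^ 2 * c2 * (θmin ^ 2 * c2) * q) = (θmin ^ 2 * (c2 * q)) ^ 2 := by ring
        _ ≤ (w ⬝ᵥ g) ^ 2 := pow_le_pow_left₀ (by positivity) hstep1 2
        _ ≤ q * (g ⬝ᵥ g) := hCS
    have hfin : (θmin ^ 2 * c1 * c2) ^ 2 ≤ μ ^ 2 := by
      refine le_of_mul_le_mul_right ?_ hqpos
      calc (θmin ^ 2 * c1 * c2) ^ 2 * q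
          = c1 ^ 2 * (θmin ^ 2 * c2 * (θmin ^ 2 * c2) * q) := by ring
        _ ≤ c1 ^ 2 * (g ⬝ᵥ g) := mul_le_mul_of_nonneg_left hG2 (sq_nonneg _)
        _ ≤ μ ^ 2 * q := hstep3
    have hnn : 0 ≤ θmin ^ 2 * c1 * c2 := by positivity
    nlinarith [abs_nonneg μ, sq_abs μ, hfin, hnn]
end

section
/- Let V, V̂ ∈ ℝ^{n×K} each have orthonormal columns (V'V = I_K and V̂'V̂ = I_K), and let O ∈ ℝ^{K×K} be any orthogonal matrix. Then ‖V̂V̂' − VV'‖_{2→∞} ≤ ‖V − V̂O‖_{2→∞} + (‖V − V̂O‖_{2→∞} + ‖V‖_{2→∞}) · ‖V − V̂O‖_F, where ‖M‖_{2→∞} = max_i ‖M(i,:)‖₂ is the maximum row ℓ₂-norm and ‖·‖_F is the Frobenius norm. -/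
open Matrix

/-- The two-to-infinity norm of a matrix: the maximum ℓ₂-norm of its rows. -/
noncomputable def twoToInfNorm {n m : ℕ} (M : Matrix (Fin n) (Fin m) ℝ) : ℝ :=
  ⨆ i, rnorm (M i)

/-- The Frobenius norm of a matrix. -/
noncomputable def frobNorm {n m : ℕ} (M : Matrix (Fin n) (Fin m) ℝ) : ℝ :=
  Real.sqrt (∑ i, ∑ j, M i j ^ 2)

lemma frobNorm_nonneg {n m : ℕ} (M : Matrix (Fin n) (Fin m) ℝ) : 0 ≤ frobNorm M := Real.sqrt_nonneg _
lemma twoToInfNorm_nonneg {n m : ℕ} (M : Matrix (Fin n) (Fin m) ℝ) : 0 ≤ twoToInfNorm M :=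
  Real.iSup_nonneg fun i => rnorm_nonneg _

lemma rnorm_le_two_to_inf {n m : ℕ} (M : Matrix (Fin n) (Fin m) ℝ) (i : Fin n) :
    rnorm (M i) ≤ twoToInfNorm M := by
  unfold twoToInfNorm
  exact le_ciSup (f := fun i => rnorm (M i)) (Set.Finite.bddAbove (Set.finite_range _)) i

lemma rnorm_row_eq {n m : ℕ} (A : Matrix (Fin n) (Fin m) ℝ) (i : Fin n) :
    rnorm (A i) = Real.sqrt ((A * Aᵀ) i i) := by
  simp [rnorm, Matrix.mul_apply, Matrix.transpose_apply, sq]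

lemma rnorm_neg {m : ℕ} (v : Fin m → ℝ) : rnorm (-v) = rnorm v := by
  simp [rnorm]

lemma sum_mul_le {m : ℕ} (u v : Fin m → ℝ) : ∑ j, u j * v j ≤ rnorm u * rnorm v := by
  have h := Finset.sum_mul_sq_le_sq_mul_sq Finset.univ u v
  have h2 := Real.sqrt_le_sqrt h
  calc ∑ j, u j * v j ≤ |∑ j, u j * v j| := le_abs_self _
    _ = Real.sqrt ((∑ j, u j * v j)^2) := (Real.sqrt_sq_eq_abs _).symm
    _ ≤ Real.sqrt ((∑ j, u j ^2) * ∑ j, v j ^2) := h2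
    _ = rnorm u * rnorm v := by rw [Real.sqrt_mul (by positivity)]; rfl

lemma rnorm_triangle {m : ℕ} (u v : Fin m → ℝ) : rnorm (u + v) ≤ rnorm u + rnorm v := by
  have h : ∑ j, (u + v) j ^ 2 ≤ (rnorm u + rnorm v)^2 := by
    have hc := sum_mul_le u v
    have hu : rnorm u ^ 2 = ∑ j, u j ^2 := Real.sq_sqrt (by positivity)
    have hv : rnorm v ^ 2 = ∑ j, v j ^2 := Real.sq_sqrt (by positivity)
    simp only [Pi.add_apply]
    have : ∑ j, (u j + v j)^2 = (∑ j, u j ^2) + 2 * (∑ j, u j * v j) + ∑ j, v j ^2 := by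
      simp only [add_sq, Finset.sum_add_distrib, Finset.mul_sum, mul_assoc]
    rw [this, ← hu, ← hv]; nlinarith [rnorm_nonneg u, rnorm_nonneg v]
  calc rnorm (u+v) ≤ Real.sqrt ((rnorm u + rnorm v)^2) := Real.sqrt_le_sqrt h
    _ = rnorm u + rnorm v := Real.sqrt_sq (add_nonneg (rnorm_nonneg u) (rnorm_nonneg v))

lemma rnorm_sub_le {m : ℕ} (u v : Fin m → ℝ) : rnorm (u - v) ≤ rnorm u + rnorm v := by
  have := rnorm_triangle u (-v)
  simpa [rnorm_neg, sub_eq_add_neg] using this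

/-- Cauchy–Schwarz row bound: `‖(A Bᵀ)(i,:)‖ ≤ ‖A(i,:)‖ ⬝ ‖B‖_F`. -/
lemma rnorm_mul_transpose_le {n p m : ℕ} (A : Matrix (Fin n) (Fin m) ℝ)
    (B : Matrix (Fin p) (Fin m) ℝ) (i : Fin n) :
    rnorm ((A * Bᵀ) i) ≤ rnorm (A i) * frobNorm B := by
  have hsum : ∑ j, ((A * Bᵀ) i j)^2 ≤ (∑ k, A i k ^2) * ∑ j, ∑ k, B j k ^2 := by
    rw [Finset.mul_sum]
    apply Finset.sum_le_sum
    intro j _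
    have := Finset.sum_mul_sq_le_sq_mul_sq Finset.univ (A i) (B j)
    simpa [Matrix.mul_apply, Matrix.transpose_apply] using this
  have h1 : rnorm ((A * Bᵀ) i) ≤ Real.sqrt ((∑ k, A i k ^2) * ∑ j, ∑ k, B j k ^2) :=
    Real.sqrt_le_sqrt hsum
  rwa [Real.sqrt_mul (by positivity)] at h1

/-- Isometry: if `VᵀV = 1` then `‖(M Vᵀ)(i,:)‖ = ‖M(i,:)‖`. -/
lemma rnorm_mul_isometry {n p m : ℕ} (M : Matrix (Fin n) (Fin m) ℝ)
    (V : Matrix (Fin p) (Fin m) ℝ) (hV : Vᵀ * V = 1) (i : Fin n) :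
    rnorm ((M * Vᵀ) i) = rnorm (M i) := by
  rw [rnorm_row_eq, rnorm_row_eq M i]
  congr 1
  have : (M * Vᵀ) * (M * Vᵀ)ᵀ = M * Mᵀ := by
    rw [Matrix.transpose_mul, Matrix.transpose_transpose]
    rw [Matrix.mul_assoc, ← Matrix.mul_assoc Vᵀ, hV, Matrix.one_mul]
  rw [this]

/-- **row-wise projection perturbation.** For `V, V̂ ∈ ℝ^{n×K}` with
orthonormal columns and any orthogonal `O ∈ ℝ^{K×K}`,
`‖V̂V̂' − VV'‖_{2→∞} ≤ ‖V − V̂O‖_{2→∞} + (‖V − V̂O‖_{2→∞} + ‖V‖_{2→∞})·‖V − V̂O‖_F`. -/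
theorem projection_two_to_inf_bound {n K : ℕ}
    (V Vh : Matrix (Fin n) (Fin K) ℝ)
    (hV : Vᵀ * V = 1) (hVh : Vhᵀ * Vh = 1)
    (O : Matrix (Fin K) (Fin K) ℝ) (hO : Oᵀ * O = 1) :
    twoToInfNorm (Vh * Vhᵀ - V * Vᵀ) ≤
      twoToInfNorm (V - Vh * O) +
        (twoToInfNorm (V - Vh * O) + twoToInfNorm V) * frobNorm (V - Vh * O) := by
  set W : Matrix (Fin n) (Fin K) ℝ := Vh * O with hW
  set D : Matrix (Fin n) (Fin K) ℝ := V - W with hD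
  have hOO : O * Oᵀ = 1 := mul_eq_one_comm.mp hO
  have hWW : Wᵀ * W = 1 := by
    rw [hW, Matrix.transpose_mul, Matrix.mul_assoc, ← Matrix.mul_assoc Vhᵀ, hVh,
      Matrix.one_mul, hO]
  have key : Vh * Vhᵀ - V * Vᵀ = -(D * Vᵀ + W * Dᵀ) := by
    have h1 : Vh * Vhᵀ = W * Wᵀ := by
      rw [hW, Matrix.transpose_mul, Matrix.mul_assoc, ← Matrix.mul_assoc O, hOO,
        Matrix.one_mul]
    rw [h1, hD, Matrix.transpose_sub, Matrix.sub_mul, Matrix.mul_sub]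
    abel
  set t := twoToInfNorm D with ht
  set v := twoToInfNorm V with hv
  set F := frobNorm D with hF
  have hrow : ∀ i, rnorm ((Vh * Vhᵀ - V * Vᵀ) i) ≤ t + (t + v) * F := by
    intro i
    have e1 : (Vh * Vhᵀ - V * Vᵀ) i = -((D * Vᵀ) i + (W * Dᵀ) i) := by
      rw [key]; rfl
    rw [e1, rnorm_neg]
    have h1 : rnorm ((D * Vᵀ) i + (W * Dᵀ) i) ≤ rnorm ((D * Vᵀ) i) + rnorm ((W * Dᵀ) i) :=
      rnorm_triangle _ _
    have h2 : rnorm ((D * Vᵀ) i) = rnorm (D i) := rnorm_mul_isometry D V hV i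
    have h3 : rnorm ((W * Dᵀ) i) ≤ rnorm (W i) * F := rnorm_mul_transpose_le W D i
    have h4 : rnorm (W i) ≤ v + t := by
      have hWi : W i = V i - D i := by
        funext j
        simp only [hD, Matrix.sub_apply, Pi.sub_apply]
        ring
      calc rnorm (W i) = rnorm (V i - D i) := by rw [hWi]
        _ ≤ rnorm (V i) + rnorm (D i) := rnorm_sub_le _ _
        _ ≤ v + t := add_le_add (rnorm_le_two_to_inf V i) (rnorm_le_two_to_inf D i)
    have h5 : rnorm (D i) ≤ t := rnorm_le_two_to_inf D i
    have hF0 : 0 ≤ F := frobNorm_nonneg D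
    calc rnorm ((D * Vᵀ) i + (W * Dᵀ) i) ≤ rnorm (D i) + rnorm (W i) * F := by
          rw [← h2]; exact le_trans h1 (add_le_add_right h3 _)
      _ ≤ t + (v + t) * F := add_le_add h5 (mul_le_mul_of_nonneg_right h4 hF0)
      _ = t + (t + v) * F := by ring
  exact Real.iSup_le hrow (add_nonneg (twoToInfNorm_nonneg D)
    (mul_nonneg (add_nonneg (twoToInfNorm_nonneg D) (twoToInfNorm_nonneg V))
      (frobNorm_nonneg D)))
end

section
/- Under the ideal setup (V = Θ̃ Π Θ̃(I,I)^{-1} V(I,:), V'V = I_K, Π a rank-K membership matrix with pure index tuple I so Π(I,:) = I_K, Θ̃ diagonal with diagonal entries in [θ̃_min, θ̃_max], θ̃_min > 0, every row of V nonzero, V(I,:) invertible), one has the entrywise inequality (V_{*,1}(I,:) V_{*,1}(I,:)')^{-1} ≥ (θ̃_min⁴ / (θ̃_max⁴ · K · λ₁(Π'Π))) · Π'Π, and consequently η := min_{1≤k≤K} ((V_{*,1}(I,:) V_{*,1}(I,:)')^{-1} 𝟏)(k) ≥ θ̃_min⁴ · π_min / (θ̃_max⁴ · K · λ₁(Π'Π)),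 where π_min = min_{1≤k≤K} Σ_{i=1}^n Π(i,k) and λ₁(Π'Π) is the largest eigenvalue of Π'Π. -/
open Matrix

lemma diag_le_sup_eig {K : ℕ} [NeZero K] {M : Matrix (Fin K) (Fin K) ℝ}
    (hM : M.IsHermitian) (k : Fin K) : M k k ≤ ⨆ j, hM.eigenvalues j := by
  have hU := hM.spectral_theorem
  set U : Matrix (Fin K) (Fin K) ℝ := (hM.eigenvectorUnitary : Matrix (Fin K) (Fin K) ℝ) with hUdef
  have hUU : U * star U = 1 := (Matrix.mem_unitaryGroup_iff).mp hM.eigenvectorUnitary.2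
  have hMkk : M k k = ∑ j, hM.eigenvalues j * (U k j)^2 := by
    conv_lhs => rw [hU]
    rw [Unitary.conjStarAlgAut_apply]
    simp only [Matrix.mul_apply, Matrix.diagonal_apply, Finset.sum_ite_eq, star, sq,
      Function.comp_apply, RCLike.ofReal_real_eq_id, id_eq, Matrix.conjTranspose_apply,
      Finset.sum_ite_eq', Finset.mem_univ, if_pos, ite_mul, zero_mul, star_trivial]
    exact Finset.sum_congr rfl fun j _ => by
      rw [Finset.sum_eq_single j (fun b _ hb => by simp [hb]) (by simp)]
      simp [hUdef, Matrix.IsHermitian.eigenvectorUnitary_apply]; ring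
  have hUrow : ∑ j, (U k j)^2 = 1 := by
    have := congrFun (congrFun hUU k) k
    simp only [Matrix.mul_apply, Matrix.one_apply_eq, Matrix.conjTranspose_apply, star_trivial,
      sq] at this ⊢
    simpa [sq] using this
  have hbdd : BddAbove (Set.range hM.eigenvalues) := Set.Finite.bddAbove (Set.finite_range _)
  calc M k k = ∑ j, hM.eigenvalues j * (U k j)^2 := hMkk
    _ ≤ ∑ j, (⨆ i, hM.eigenvalues i) * (U k j)^2 := by
        apply Finset.sum_le_sum
        intro j _
        exact mul_le_mul_of_nonneg_right (le_ciSup hbdd j) (sq_nonneg _)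
    _ = ⨆ i, hM.eigenvalues i := by rw [← Finset.mul_sum, hUrow, mul_one]

/-- **lower bound for `η`.** Under the ideal setup, the entrywise inequality
`(V₊(I,:) V₊(I,:)')⁻¹ ≥ (θmin⁴/(θmax⁴·K·λ₁(Π'Π)))·Π'Π` holds, and consequently
`η = min_k ((V₊(I,:) V₊(I,:)')⁻¹ 𝟏)(k) ≥ θmin⁴·π_min/(θmax⁴·K·λ₁(Π'Π))`, where
`π_min = min_k Σ_i Π(i,k)` and `λ₁(Π'Π)` is the largest eigenvalue of `Π'Π`. -/
theorem eta_lower_bound {n K : ℕ} (hK : 1 ≤ K) (hKn : K ≤ n)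
    (Pim : Matrix (Fin n) (Fin K) ℝ)
    (hnonneg : ∀ i k, 0 ≤ Pim i k)
    (hrowsum : ∀ i, ∑ k, Pim i k = 1)
    (hrank : Pim.rank = K)
    (I : Fin K → Fin n)
    (hpure : ∀ k l, Pim (I k) l = if l = k then (1 : ℝ) else 0)
    (θ : Fin n → ℝ) (θmin θmax : ℝ) (hθmin : 0 < θmin)
    (hθ : ∀ i, θmin ≤ θ i ∧ θ i ≤ θmax)
    (V : Matrix (Fin n) (Fin K) ℝ)
    (hVorth : Vᵀ * V = 1)
    (hVdef : V = Matrix.diagonal θ * Pim *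
      (Matrix.diagonal (fun k => (θ (I k))⁻¹) * V.submatrix I id))
    (hrows : ∀ i, V i ≠ 0)
    (hVI : IsUnit (V.submatrix I id))
    (hH : (Pimᵀ * Pim).IsHermitian) :
    let Vc := (rowNormalize V).submatrix I id
    (∀ k l, θmin ^ 4 / (θmax ^ 4 * K * ⨆ j, hH.eigenvalues j) * (Pimᵀ * Pim) k l ≤
      (Vc * Vcᵀ)⁻¹ k l) ∧
    θmin ^ 4 * (⨅ k, ∑ i, Pim i k) / (θmax ^ 4 * K * ⨆ j, hH.eigenvalues j) ≤
      ⨅ k, ((Vc * Vcᵀ)⁻¹ *ᵥ fun _ => (1 : ℝ)) k := by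
  intro Vc
  have hVcdef : Vc = (rowNormalize V).submatrix I id := rfl
  haveI : NeZero K := ⟨Nat.one_le_iff_ne_zero.mp hK⟩
  have hn : 0 < n := lt_of_lt_of_le hK hKn
  have hθpos : ∀ i, 0 < θ i := fun i => lt_of_lt_of_le hθmin (hθ i).1
  have hθmax : 0 < θmax := lt_of_lt_of_le (hθpos ⟨0, hn⟩) (hθ ⟨0, hn⟩).2
  have hminmax : θmin ≤ θmax := le_trans (hθ ⟨0, hn⟩).1 (hθ ⟨0, hn⟩).2
  set lam := ⨆ j, hH.eigenvalues j with hlamdef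
  have hPnn : ∀ k l, 0 ≤ (Pimᵀ * Pim) k l := fun k l => by
    rw [Matrix.mul_apply]
    exact Finset.sum_nonneg fun i _ => mul_nonneg (hnonneg i k) (hnonneg i l)
  have hPdiag : ∀ k, (1:ℝ) ≤ (Pimᵀ * Pim) k k := fun k => by
    rw [Matrix.mul_apply]
    have h1 : Pimᵀ k (I k) * Pim (I k) k = 1 := by
      simp [Matrix.transpose_apply, hpure]
    calc (1:ℝ) = Pimᵀ k (I k) * Pim (I k) k := h1.symm
      _ ≤ ∑ i, Pimᵀ k i * Pim i k :=
        Finset.single_le_sum (f := fun i => Pimᵀ k i * Pim i k)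
          (fun i _ => mul_nonneg (hnonneg i k) (hnonneg i k)) (Finset.mem_univ _)
  have hlam1 : (1:ℝ) ≤ lam := le_trans (hPdiag ⟨0, hK⟩) (diag_le_sup_eig hH _)
  have hlam0 : (0:ℝ) < lam := lt_of_lt_of_le one_pos hlam1
  have hKR : (1:ℝ) ≤ (K:ℝ) := by exact_mod_cast hK
  have hD0 : (0:ℝ) < θmax ^ 4 * K * lam :=
    mul_pos (mul_pos (pow_pos hθmax 4) (by linarith)) hlam0
  set A := V.submatrix I id with hAdef
  have hAdet : IsUnit A.det := (Matrix.isUnit_iff_isUnit_det A).mp hVI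
  set G := Matrix.diagonal (fun k => (θ (I k))⁻¹) with hGdef
  set M := G * (Pimᵀ * (Matrix.diagonal θ * (Matrix.diagonal θ * (Pim * G)))) with hMdef
  have hAMA : Aᵀ * (M * A) = 1 := by
    rw [hVdef] at hVorth
    rw [hMdef]
    simp only [Matrix.transpose_mul, Matrix.diagonal_transpose, Matrix.mul_assoc,
      hGdef] at hVorth ⊢
    exact hVorth
  have hMA : A⁻¹ = Aᵀ * M := Matrix.inv_eq_left_inv (by rw [Matrix.mul_assoc]; exact hAMA)
  have hAAM : (A * Aᵀ) * M = 1 := by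
    rw [Matrix.mul_assoc, ← hMA]
    exact Matrix.mul_nonsing_inv A hAdet
  have hMinv : (A * Aᵀ)⁻¹ = M := Matrix.inv_eq_right_inv hAAM
  set d : Fin K → ℝ := fun k => rnorm (V (I k)) with hddef
  have hdpos : ∀ k, 0 < d k := by
    intro k
    have hv := hrows (I k)
    have hs : 0 < ∑ j, V (I k) j ^ 2 := by
      obtain ⟨j, hj⟩ := Function.ne_iff.mp hv
      exact Finset.sum_pos' (fun j _ => sq_nonneg _) ⟨j, Finset.mem_univ _, lt_of_le_of_ne (sq_nonneg _) (Ne.symm (pow_ne_zero 2 hj))⟩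
    simpa [hddef, rnorm] using Real.sqrt_pos.mpr hs
  have hVc : Vc = Matrix.diagonal (fun k => (d k)⁻¹) * A := by
    rw [hVcdef, hAdef]
    ext k j
    simp only [Matrix.submatrix_apply, rowNormalize, Matrix.of_apply, Matrix.diagonal_mul,
      id_eq, hddef, div_eq_inv_mul]
  have hentry : ∀ k l, (Vc * Vcᵀ)⁻¹ k l = d k * (M k l * d l) := by
    have h1 : Vc * Vcᵀ = Matrix.diagonal (fun k => (d k)⁻¹) *
        ((A * Aᵀ) * Matrix.diagonal (fun k => (d k)⁻¹)) := by
      rw [hVc]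
      simp only [Matrix.transpose_mul, Matrix.diagonal_transpose, Matrix.mul_assoc]
    have hdiaginv : (Matrix.diagonal (fun k => (d k)⁻¹))⁻¹ = Matrix.diagonal d := by
      apply Matrix.inv_eq_right_inv
      rw [Matrix.diagonal_mul_diagonal,
        show (fun k => (d k)⁻¹ * d k) = fun _ => (1:ℝ) from
          funext fun k => inv_mul_cancel₀ (hdpos k).ne', Matrix.diagonal_one]
    have h2 : (Vc * Vcᵀ)⁻¹ = Matrix.diagonal d * (M * Matrix.diagonal d) := by
      rw [h1, Matrix.mul_inv_rev, Matrix.mul_inv_rev, hMinv, hdiaginv]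
      simp only [Matrix.mul_assoc]
    intro k l
    rw [h2]
    simp [Matrix.diagonal_mul, Matrix.mul_diagonal, mul_comm, mul_assoc]
  have hMentry : ∀ k l, M k l =
      (θ (I k))⁻¹ * (θ (I l))⁻¹ * ∑ i, θ i ^ 2 * (Pim i k * Pim i l) := by
    intro k l
    rw [hMdef, hGdef]
    simp only [Matrix.mul_apply, Matrix.transpose_apply,
      Matrix.diagonal_apply, ite_mul, mul_ite, zero_mul, mul_zero, Finset.sum_ite_eq,
      Finset.sum_ite_eq', Finset.mem_univ, if_true, Finset.mul_sum]
    rw [Finset.sum_comm]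
    simp only [Finset.sum_ite_eq, Finset.mem_univ, if_true]
    exact Finset.sum_congr rfl fun i _ => by ring
  -- Cauchy–Schwarz: lower bound on d k
  have hMkk' : ∀ k, M k k = ∑ j, (A⁻¹ j k)^2 := by
    intro k
    have hM2 : M = (A⁻¹)ᵀ * A⁻¹ := by
      rw [← hMinv, Matrix.mul_inv_rev, Matrix.transpose_nonsing_inv]
    rw [hM2]
    simp [Matrix.mul_apply, sq]
  have hd2 : ∀ k, d k ^ 2 = ∑ j, (A k j)^2 := by
    intro k
    have : d k = Real.sqrt (∑ j, (A k j)^2) := rfl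
    rw [this, Real.sq_sqrt (Finset.sum_nonneg fun j _ => sq_nonneg _)]
  have hCS : ∀ k, 1 ≤ d k ^ 2 * M k k := by
    intro k
    have hAB : ∑ j, A k j * A⁻¹ j k = 1 := by
      have h := congrFun (congrFun (Matrix.mul_nonsing_inv A hAdet) k) k
      simpa [Matrix.mul_apply, Matrix.one_apply] using h
    calc (1:ℝ) = (∑ j, A k j * A⁻¹ j k)^2 := by rw [hAB]; norm_num
      _ ≤ (∑ j, (A k j)^2) * ∑ j, (A⁻¹ j k)^2 :=
        Finset.sum_mul_sq_le_sq_mul_sq Finset.univ _ _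
      _ = d k ^ 2 * M k k := by rw [hd2, hMkk']
  have hMkk_up : ∀ k, M k k ≤ (θ (I k))⁻¹ ^ 2 * (θmax ^ 2 * lam) := by
    intro k
    rw [hMentry k k]
    have h1 : ∑ i, θ i ^ 2 * (Pim i k * Pim i k) ≤ θmax ^ 2 * (Pimᵀ * Pim) k k := by
      rw [Matrix.mul_apply, Finset.mul_sum]
      apply Finset.sum_le_sum
      intro i _
      have ht : θ i ^ 2 ≤ θmax ^ 2 := pow_le_pow_left₀ (hθpos i).le (hθ i).2 2
      have hnn : 0 ≤ Pim i k * Pim i k := mul_nonneg (hnonneg _ _) (hnonneg _ _)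
      simpa [Matrix.transpose_apply] using mul_le_mul_of_nonneg_right ht hnn
    have h2 : (Pimᵀ * Pim) k k ≤ lam := diag_le_sup_eig hH k
    have h3 : ∑ i, θ i ^ 2 * (Pim i k * Pim i k) ≤ θmax ^ 2 * lam := by nlinarith [sq_nonneg θmax]
    have h4 : (0:ℝ) < (θ (I k))⁻¹ := inv_pos.mpr (hθpos _)
    calc (θ (I k))⁻¹ * (θ (I k))⁻¹ * ∑ i, θ i ^ 2 * (Pim i k * Pim i k)
        ≤ (θ (I k))⁻¹ * (θ (I k))⁻¹ * (θmax ^ 2 * lam) :=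
          mul_le_mul_of_nonneg_left h3 (by positivity)
      _ = (θ (I k))⁻¹ ^ 2 * (θmax ^ 2 * lam) := by ring
  -- the normalized bound : e k := d k * (θ (I k))⁻¹
  have he2 : ∀ k, 1 ≤ (d k * (θ (I k))⁻¹) ^ 2 * (θmax ^ 2 * lam) := by
    intro k
    have h1 := hCS k
    have h2 := hMkk_up k
    have h3 : 0 ≤ d k ^ 2 := sq_nonneg _
    have h4 : 0 < θ (I k) := hθpos _
    have h5 : (θ (I k))⁻¹ * θ (I k) = 1 := inv_mul_cancel₀ (ne_of_gt h4)
    nlinarith [mul_le_mul_of_nonneg_left h2 h3, sq_nonneg (d k * (θ (I k))⁻¹)]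
  have hT : (0:ℝ) < θmax ^ 2 * lam := by positivity
  have hpair : ∀ k l, 1 ≤ (d k * (θ (I k))⁻¹) * (d l * (θ (I l))⁻¹) * (θmax ^ 2 * lam) := by
    intro k l
    have ha : 0 < d k * (θ (I k))⁻¹ := mul_pos (hdpos k) (inv_pos.mpr (hθpos _))
    have hb : 0 < d l * (θ (I l))⁻¹ := mul_pos (hdpos l) (inv_pos.mpr (hθpos _))
    have hsq : 1 ≤ ((d k * (θ (I k))⁻¹) * (d l * (θ (I l))⁻¹) * (θmax ^ 2 * lam)) ^ 2 := by
      have := mul_le_mul (he2 k) (he2 l) zero_le_one (by positivity)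
      calc (1:ℝ) = 1 * 1 := by ring
        _ ≤ _ := this
        _ = ((d k * (θ (I k))⁻¹) * (d l * (θ (I l))⁻¹) * (θmax ^ 2 * lam)) ^ 2 := by ring
    nlinarith [mul_pos (mul_pos ha hb) hT]
  -- main entrywise bound
  have key : ∀ k l, θmin ^ 4 / (θmax ^ 4 * K * lam) * (Pimᵀ * Pim) k l ≤
      (Vc * Vcᵀ)⁻¹ k l := by
    intro k l
    rw [hentry k l]
    have hMlow : θmin ^ 2 * ((θ (I k))⁻¹ * (θ (I l))⁻¹) * (Pimᵀ * Pim) k l ≤ M k l := by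
      rw [hMentry k l, Matrix.mul_apply]
      have : ∑ i, θmin ^ 2 * (Pim i k * Pim i l) ≤ ∑ i, θ i ^ 2 * (Pim i k * Pim i l) := by
        apply Finset.sum_le_sum
        intro i _
        exact mul_le_mul_of_nonneg_right (pow_le_pow_left₀ hθmin.le (hθ i).1 2)
          (mul_nonneg (hnonneg _ _) (hnonneg _ _))
      calc θmin ^ 2 * ((θ (I k))⁻¹ * (θ (I l))⁻¹) * ∑ i, Pimᵀ k i * Pim i l
          = (θ (I k))⁻¹ * (θ (I l))⁻¹ * ∑ i, θmin ^ 2 * (Pim i k * Pim i l) := by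
            simp only [Matrix.transpose_apply, Finset.mul_sum]
            exact Finset.sum_congr rfl fun i _ => by ring
        _ ≤ (θ (I k))⁻¹ * (θ (I l))⁻¹ * ∑ i, θ i ^ 2 * (Pim i k * Pim i l) := by
            exact mul_le_mul_of_nonneg_left this
              (mul_nonneg (inv_nonneg.mpr (hθpos _).le) (inv_nonneg.mpr (hθpos _).le))
    have hstep : (d k * (θ (I k))⁻¹) * (d l * (θ (I l))⁻¹) * (θmin ^ 2 * (Pimᵀ * Pim) k l)
        ≤ d k * (M k l * d l) := by
      have h1 : d k * ((θmin ^ 2 * ((θ (I k))⁻¹ * (θ (I l))⁻¹) * (Pimᵀ * Pim) k l) * d l)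
          ≤ d k * (M k l * d l) := by
        apply mul_le_mul_of_nonneg_left _ (hdpos k).le
        exact mul_le_mul_of_nonneg_right hMlow (hdpos l).le
      calc (d k * (θ (I k))⁻¹) * (d l * (θ (I l))⁻¹) * (θmin ^ 2 * (Pimᵀ * Pim) k l)
          = d k * ((θmin ^ 2 * ((θ (I k))⁻¹ * (θ (I l))⁻¹) * (Pimᵀ * Pim) k l) * d l) := by ring
        _ ≤ d k * (M k l * d l) := h1
    have hstep2 : (1 / (θmax ^ 2 * lam)) * (θmin ^ 2 * (Pimᵀ * Pim) k l)
        ≤ (d k * (θ (I k))⁻¹) * (d l * (θ (I l))⁻¹) * (θmin ^ 2 * (Pimᵀ * Pim) k l) := by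
      apply mul_le_mul_of_nonneg_right _ (mul_nonneg (by positivity) (hPnn k l))
      rw [div_le_iff₀ hT]
      exact hpair k l
    have hstep3 : θmin ^ 4 / (θmax ^ 4 * K * lam) * (Pimᵀ * Pim) k l
        ≤ (1 / (θmax ^ 2 * lam)) * (θmin ^ 2 * (Pimᵀ * Pim) k l) := by
      have hc : θmin ^ 4 / (θmax ^ 4 * K * lam) ≤ (1 / (θmax ^ 2 * lam)) * θmin ^ 2 := by
        have he : (1 / (θmax ^ 2 * lam)) * θmin ^ 2 = θmin ^ 2 / (θmax ^ 2 * lam) := by ring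
        rw [he, div_le_div_iff₀ hD0 hT]
        have e1 : θmin ^ 2 ≤ θmax ^ 2 := pow_le_pow_left₀ hθmin.le hminmax 2
        calc θmin ^ 4 * (θmax ^ 2 * lam) = (θmin ^ 2 * lam) * (θmin ^ 2 * θmax ^ 2) := by ring
          _ ≤ (θmin ^ 2 * lam) * (θmax ^ 2 * θmax ^ 2) :=
              mul_le_mul_of_nonneg_left (mul_le_mul_of_nonneg_right e1 (sq_nonneg θmax))
                (mul_nonneg (sq_nonneg _) hlam0.le)
          _ = (θmin ^ 2 * (θmax ^ 4 * lam)) * 1 := by ring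
          _ ≤ (θmin ^ 2 * (θmax ^ 4 * lam)) * K :=
              mul_le_mul_of_nonneg_left hKR
                (mul_nonneg (sq_nonneg _) (mul_nonneg (by positivity) hlam0.le))
          _ = θmin ^ 2 * (θmax ^ 4 * ↑K * lam) := by ring
      calc θmin ^ 4 / (θmax ^ 4 * K * lam) * (Pimᵀ * Pim) k l
          ≤ ((1 / (θmax ^ 2 * lam)) * θmin ^ 2) * (Pimᵀ * Pim) k l :=
            mul_le_mul_of_nonneg_right hc (hPnn k l)
        _ = (1 / (θmax ^ 2 * lam)) * (θmin ^ 2 * (Pimᵀ * Pim) k l) := by ring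
    exact le_trans hstep3 (le_trans hstep2 hstep)
  refine ⟨key, ?_⟩
  -- second part
  have hc0 : 0 ≤ θmin ^ 4 / (θmax ^ 4 * K * lam) := div_nonneg (by positivity) hD0.le
  have hrowP : ∀ k, ∑ l, (Pimᵀ * Pim) k l = ∑ i, Pim i k := by
    intro k
    simp only [Matrix.mul_apply, Matrix.transpose_apply]
    rw [Finset.sum_comm]
    exact Finset.sum_congr rfl fun i _ => by rw [← Finset.mul_sum, hrowsum i, mul_one]
  have hbddP : BddBelow (Set.range fun k => ∑ i, Pim i k) :=
    Set.Finite.bddBelow (Set.finite_range _)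
  apply le_ciInf
  intro k
  have h1 : ((Vc * Vcᵀ)⁻¹ *ᵥ fun _ => (1:ℝ)) k = ∑ l, (Vc * Vcᵀ)⁻¹ k l := by
    simp [Matrix.mulVec, dotProduct]
  rw [h1]
  calc θmin ^ 4 * (⨅ k', ∑ i, Pim i k') / (θmax ^ 4 * K * lam)
      = θmin ^ 4 / (θmax ^ 4 * K * lam) * (⨅ k', ∑ i, Pim i k') := by ring
    _ ≤ θmin ^ 4 / (θmax ^ 4 * K * lam) * ∑ i, Pim i k :=
        mul_le_mul_of_nonneg_left (ciInf_le hbddP k) hc0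
    _ = θmin ^ 4 / (θmax ^ 4 * K * lam) * ∑ l, (Pimᵀ * Pim) k l := by rw [hrowP]
    _ = ∑ l, θmin ^ 4 / (θmax ^ 4 * K * lam) * (Pimᵀ * Pim) k l := Finset.mul_sum _ _ _
    _ ≤ ∑ l, (Vc * Vcᵀ)⁻¹ k l := Finset.sum_le_sum fun l _ => key k l
end
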